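/- arXiv:2206.00664 — 9 statements merged into one kernel-verified Lean document; each statement's English description precedes it below -/
import Mathlib

section
/- For every ξ ∈ ℝ^d the energy E is differentiable at ξ with gradient ∇E(ξ) = ξ − X softmax(β X^T ξ) = ξ − f(ξ); consequently ∇E(ξ) = 0 if and only if ξ is a fixed point of the Hopfield update rule, i.e. f(ξ) = ξ. -/
open scoped BigOperators RealInnerProductSpace

/-- softmax(v)_j = exp(v_j) / Σ_k exp(v_k). -/
noncomputable def softmax {N : ℕ} (v : Fin N → ℝ) : Fin N → ℝ :=
  fun j => Real.exp (v j) / ∑ k, Real.exp (v k)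

/-- The Hopfield update rule f(ξ) = X softmax(β Xᵀ ξ) = Σ_i softmax(β ⟪x_i, ξ⟫)_i • x_i. -/
noncomputable def hopfieldUpdate {d N : ℕ} (x : Fin N → EuclideanSpace ℝ (Fin d))
    (β : ℝ) (ξ : EuclideanSpace ℝ (Fin d)) : EuclideanSpace ℝ (Fin d) :=
  ∑ i, softmax (fun j => β * ⟪x j, ξ⟫) i • x i

/-- The energy E(ξ) = −β⁻¹ log(Σ_i exp(β x_iᵀ ξ)) + β⁻¹ log N + ½ ξᵀξ + ½ M². -/
noncomputable def energy {d N : ℕ} (x : Fin N → EuclideanSpace ℝ (Fin d))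
    (β M : ℝ) (ξ : EuclideanSpace ℝ (Fin d)) : ℝ :=
  -β⁻¹ * Real.log (∑ i, Real.exp (β * ⟪x i, ξ⟫)) + β⁻¹ * Real.log N
    + (1 / 2) * ⟪ξ, ξ⟫ + (1 / 2) * M ^ 2

/-- For every ξ the energy E is differentiable at ξ with gradient
∇E(ξ) = ξ − f(ξ); consequently ∇E(ξ) = 0 iff ξ is a fixed point of the update rule. -/
theorem energy_hasGradientAt_and_critical_iff_fixedPoint
    {d N : ℕ} (x : Fin N → EuclideanSpace ℝ (Fin d)) (β M : ℝ) (hβ : 0 < β)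
    (hM : IsGreatest (Set.range fun i => ‖x i‖) M)
    (ξ : EuclideanSpace ℝ (Fin d)) :
    HasGradientAt (energy x β M) (ξ - hopfieldUpdate x β ξ) ξ ∧
      (gradient (energy x β M) ξ = 0 ↔ hopfieldUpdate x β ξ = ξ) := by
  classical
  obtain ⟨i0, -⟩ := hM.1
  set S : ℝ := ∑ i, Real.exp (β * ⟪x i, ξ⟫) with hSdef
  have hS_pos : 0 < S :=
    Finset.sum_pos (fun i _ => Real.exp_pos _) ⟨i0, Finset.mem_univ i0⟩
  have h2 : ∀ i : Fin N, HasFDerivAt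
      (fun ζ : EuclideanSpace ℝ (Fin d) => Real.exp (β * ⟪x i, ζ⟫))
      (Real.exp (β * ⟪x i, ξ⟫) • (β • innerSL ℝ (x i))) ξ := fun i =>
    (((innerSL ℝ (x i)).hasFDerivAt (x := ξ)).const_mul β).exp
  have hS : HasFDerivAt (fun ζ : EuclideanSpace ℝ (Fin d) => ∑ i, Real.exp (β * ⟪x i, ζ⟫))
      (∑ i, Real.exp (β * ⟪x i, ξ⟫) • (β • innerSL ℝ (x i))) ξ :=
    HasFDerivAt.fun_sum fun i _ => h2 i
  have hlog : HasFDerivAt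
      (fun ζ : EuclideanSpace ℝ (Fin d) => Real.log (∑ i, Real.exp (β * ⟪x i, ζ⟫)))
      (S⁻¹ • ∑ i, Real.exp (β * ⟪x i, ξ⟫) • (β • innerSL ℝ (x i))) ξ :=
    hS.log (by rw [← hSdef]; exact ne_of_gt hS_pos)
  have hquad : HasFDerivAt (fun ζ : EuclideanSpace ℝ (Fin d) => (⟪ζ, ζ⟫ : ℝ))
      ((fderivInnerCLM ℝ (ξ, ξ)).comp
        ((ContinuousLinearMap.id ℝ _).prod (ContinuousLinearMap.id ℝ _))) ξ :=
    (hasFDerivAt_id ξ).inner ℝ (hasFDerivAt_id ξ)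
  have hE : HasFDerivAt (energy x β M)
      ((-β⁻¹) • (S⁻¹ • ∑ i, Real.exp (β * ⟪x i, ξ⟫) • (β • innerSL ℝ (x i)))
        + (1 / 2 : ℝ) • ((fderivInnerCLM ℝ (ξ, ξ)).comp
            ((ContinuousLinearMap.id ℝ _).prod (ContinuousLinearMap.id ℝ _)))) ξ := by
    have := (((hlog.const_mul (-β⁻¹)).add_const (β⁻¹ * Real.log N)).add
      (hquad.const_mul (1 / 2 : ℝ))).add_const ((1 / 2 : ℝ) * M ^ 2)
    convert this using 1
    all_goals rfl
  have hΦ : ((-β⁻¹) • (S⁻¹ • ∑ i, Real.exp (β * ⟪x i, ξ⟫) • (β • innerSL ℝ (x i)))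
        + (1 / 2 : ℝ) • ((fderivInnerCLM ℝ (ξ, ξ)).comp
            ((ContinuousLinearMap.id ℝ _).prod (ContinuousLinearMap.id ℝ _))))
      = (InnerProductSpace.toDual ℝ (EuclideanSpace ℝ (Fin d)))
          (ξ - hopfieldUpdate x β ξ) := by
    apply ContinuousLinearMap.ext
    intro v
    simp only [ContinuousLinearMap.add_apply, ContinuousLinearMap.smul_apply,
      ContinuousLinearMap.coe_comp', Function.comp_apply, ContinuousLinearMap.prod_apply,
      ContinuousLinearMap.coe_id', id_eq, fderivInnerCLM_apply,
      ContinuousLinearMap.sum_apply, innerSL_apply_apply,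
      InnerProductSpace.toDual_apply_apply, hopfieldUpdate, softmax, inner_sub_left,
      sum_inner, real_inner_smul_left]
    rw [real_inner_comm v ξ, ← hSdef]
    rw [Finset.smul_sum, Finset.smul_sum]
    have key : ∀ i : Fin N,
        (-β⁻¹ : ℝ) • (S⁻¹ • (Real.exp (β * ⟪x i, ξ⟫) • (β • ⟪x i, v⟫)))
          = -(Real.exp (β * ⟪x i, ξ⟫) / S * ⟪x i, v⟫) := by
      intro i
      simp only [smul_eq_mul]
      field_simp
    simp only [key]
    rw [Finset.sum_neg_distrib]
    simp only [smul_eq_mul]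
    ring
  refine ⟨?_, ?_⟩
  · rw [hasGradientAt_iff_hasFDerivAt]
    exact hΦ ▸ hE
  · have hgrad : HasGradientAt (energy x β M) (ξ - hopfieldUpdate x β ξ) ξ := by
      rw [hasGradientAt_iff_hasFDerivAt]; exact hΦ ▸ hE
    rw [hgrad.gradient, sub_eq_zero, eq_comm]
end

section
/- One step of the Hopfield update rule does not increase the energy; more precisely, for every ξ ∈ ℝ^d one has E(f(ξ)) ≤ E(ξ) − ½ ‖f(ξ) − ξ‖². In particular E(f(ξ)) < E(ξ) unless ξ is a fixed point of f. -/
open scoped BigOperators RealInnerProductSpace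

/-- One step of the Hopfield update rule does not increase the energy:
E(f(ξ)) ≤ E(ξ) − ½ ‖f(ξ) − ξ‖²; in particular E(f(ξ)) < E(ξ) unless ξ is a fixed point. -/
theorem energy_update_decrease
    {d N : ℕ} (x : Fin N → EuclideanSpace ℝ (Fin d)) (β M : ℝ) (hβ : 0 < β)
    (hM : IsGreatest (Set.range fun i => ‖x i‖) M)
    (ξ : EuclideanSpace ℝ (Fin d)) :
    energy x β M (hopfieldUpdate x β ξ)
        ≤ energy x β M ξ - (1 / 2) * ‖hopfieldUpdate x β ξ - ξ‖ ^ 2 ∧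
      (hopfieldUpdate x β ξ ≠ ξ →
        energy x β M (hopfieldUpdate x β ξ) < energy x β M ξ) := by
  have hN : 0 < N := by
    obtain ⟨i, -⟩ := hM.1
    exact i.pos
  set η := hopfieldUpdate x β ξ with hη
  set S : ℝ := ∑ i, Real.exp (β * ⟪x i, ξ⟫) with hSdef
  have hS : 0 < S :=
    Finset.sum_pos (fun i _ => Real.exp_pos _)
      (Finset.univ_nonempty_iff.mpr (Fin.pos_iff_nonempty.mp hN))
  set p : Fin N → ℝ := softmax (fun j => β * ⟪x j, ξ⟫) with hpdef
  have hp_eq : ∀ i, p i = Real.exp (β * ⟪x i, ξ⟫) / S := fun i => rfl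
  have hp0 : ∀ i ∈ Finset.univ, (0 : ℝ) ≤ p i := fun i _ => by
    rw [hp_eq]; positivity
  have hp1 : ∑ i, p i = 1 := by
    simp only [hp_eq, ← Finset.sum_div]
    exact div_self hS.ne'
  -- inner product with η expands as a weighted sum
  have hinner : ∀ v : EuclideanSpace ℝ (Fin d), ⟪η, v⟫ = ∑ i, p i * ⟪x i, v⟫ := by
    intro v
    rw [hη, hopfieldUpdate, sum_inner]
    exact Finset.sum_congr rfl fun i _ => real_inner_smul_left _ _ _
  -- Jensen's inequality for exp
  have hjensen :
      Real.exp (∑ i, p i * (β * ⟪x i, η - ξ⟫)) ≤ ∑ i, p i * Real.exp (β * ⟪x i, η - ξ⟫) := by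
    have := convexOn_exp.map_sum_le (t := Finset.univ) (w := p)
      (p := fun i => β * ⟪x i, η - ξ⟫) hp0 hp1 (fun i _ => Set.mem_univ _)
    simpa using this
  -- rewrite the RHS sum
  have hsum : ∑ i, p i * Real.exp (β * ⟪x i, η - ξ⟫)
      = (∑ i, Real.exp (β * ⟪x i, η⟫)) / S := by
    rw [eq_div_iff hS.ne', Finset.sum_mul]
    refine Finset.sum_congr rfl fun i _ => ?_
    have h2 : β * ⟪x i, η⟫ = β * ⟪x i, ξ⟫ + β * ⟪x i, η - ξ⟫ := by
      rw [inner_sub_right]; ring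
    rw [hp_eq, h2, Real.exp_add]
    field_simp
  have hlhs : ∑ i, p i * (β * ⟪x i, η - ξ⟫) = β * ⟪η, η - ξ⟫ := by
    rw [hinner (η - ξ), Finset.mul_sum]
    refine Finset.sum_congr rfl fun i _ => by ring
  -- key log inequality
  have hSη : 0 < ∑ i, Real.exp (β * ⟪x i, η⟫) :=
    Finset.sum_pos (fun i _ => Real.exp_pos _)
      (Finset.univ_nonempty_iff.mpr (Fin.pos_iff_nonempty.mp hN))
  have hkey : Real.log S + β * ⟪η, η - ξ⟫ ≤ Real.log (∑ i, Real.exp (β * ⟪x i, η⟫)) := by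
    have h1 : S * Real.exp (β * ⟪η, η - ξ⟫) ≤ ∑ i, Real.exp (β * ⟪x i, η⟫) := by
      rw [← hlhs]
      calc S * Real.exp (∑ i, p i * (β * ⟪x i, η - ξ⟫))
          ≤ S * (∑ i, p i * Real.exp (β * ⟪x i, η - ξ⟫)) := by
            exact mul_le_mul_of_nonneg_left hjensen hS.le
        _ = ∑ i, Real.exp (β * ⟪x i, η⟫) := by
            rw [hsum, mul_div_cancel₀ _ hS.ne']
    have := Real.log_le_log (by positivity) h1
    rwa [Real.log_mul hS.ne' (Real.exp_pos _).ne', Real.log_exp] at this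
  -- energy difference
  have hβinv : 0 < β⁻¹ := inv_pos.mpr hβ
  have hE : energy x β M η ≤ energy x β M ξ - (1 / 2) * ‖η - ξ‖ ^ 2 := by
    have hlog : -β⁻¹ * Real.log (∑ i, Real.exp (β * ⟪x i, η⟫))
        ≤ -β⁻¹ * (Real.log S + β * ⟪η, η - ξ⟫) := by
      nlinarith [hkey]
    have hnorm : ‖η - ξ‖ ^ 2 = ⟪η, η⟫ - 2 * ⟪η, ξ⟫ + ⟪ξ, ξ⟫ := by
      rw [← real_inner_self_eq_norm_sq]
      simp only [inner_sub_left, inner_sub_right]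
      rw [real_inner_comm ξ η]; ring
    have hexp : -β⁻¹ * (Real.log S + β * (⟪η, η⟫ - ⟪η, ξ⟫))
        = -β⁻¹ * Real.log S - (⟪η, η⟫ - ⟪η, ξ⟫) := by
      field_simp; ring
    have hlog2 : -β⁻¹ * Real.log (∑ i, Real.exp (β * ⟪x i, η⟫))
        ≤ -β⁻¹ * Real.log S - (⟪η, η⟫ - ⟪η, ξ⟫) := by
      rw [inner_sub_right] at hlog
      linarith [hlog, hexp]
    simp only [energy]
    rw [← hSdef]
    linarith [hlog2, hnorm]
  refine ⟨hE, fun hne => ?_⟩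
  have hpos : 0 < (1 / 2) * ‖η - ξ‖ ^ 2 := by
    have : 0 < ‖η - ξ‖ := norm_pos_iff.mpr (sub_ne_zero.mpr hne)
    positivity
  linarith
end

section
/- Let N ≥ 2 and fix an index i. Then for every ξ ∈ ℝ^d the one-step retrieval error of the Hopfield update rule satisfies ‖f(ξ) − x_i‖ ≤ 2 M (N − 1) · exp(−β (Δ_i − 2 M ‖ξ − x_i‖)). -/
open scoped BigOperators RealInnerProductSpace

set_option maxHeartbeats 1000000 in
/-- For N ≥ 2 and index i, for every ξ the one-step retrieval error satisfies
‖f(ξ) − x_i‖ ≤ 2 M (N − 1) · exp(−β (Δ_i − 2 M ‖ξ − x_i‖)). -/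
theorem retrieval_error_bound
    {d N : ℕ} (hN : 2 ≤ N) (x : Fin N → EuclideanSpace ℝ (Fin d)) (β M Δ : ℝ)
    (hβ : 0 < β)
    (hM : IsGreatest (Set.range fun i => ‖x i‖) M)
    (i : Fin N)
    (hΔ : IsLeast {v : ℝ | ∃ j, j ≠ i ∧ v = ⟪x i, x i⟫ - ⟪x i, x j⟫} Δ)
    (ξ : EuclideanSpace ℝ (Fin d)) :
    ‖hopfieldUpdate x β ξ - x i‖
      ≤ 2 * M * ((N : ℝ) - 1) * Real.exp (-β * (Δ - 2 * M * ‖ξ - x i‖)) := by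
  have hnormx : ∀ j, ‖x j‖ ≤ M := fun j => hM.2 ⟨j, rfl⟩
  have hM0 : 0 ≤ M := le_trans (norm_nonneg (x i)) (hnormx i)
  set p : Fin N → ℝ := softmax (fun j => β * ⟪x j, ξ⟫) with hp
  have hS : 0 < ∑ k, Real.exp (β * ⟪x k, ξ⟫) :=
    Finset.sum_pos (fun k _ => Real.exp_pos _) ⟨i, Finset.mem_univ i⟩
  have hpnn : ∀ j, 0 ≤ p j := fun j => div_nonneg (Real.exp_pos _).le hS.le
  have hsum : ∑ j, p j = 1 := by
    simp only [hp, softmax]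
    rw [← Finset.sum_div, div_self hS.ne']
  have hxx : ∀ j, ‖x j - x i‖ ≤ 2 * M := fun j => by
    calc ‖x j - x i‖ ≤ ‖x j‖ + ‖x i‖ := norm_sub_le _ _
      _ ≤ 2 * M := by linarith [hnormx j, hnormx i]
  set E := Real.exp (-β * (Δ - 2 * M * ‖ξ - x i‖)) with hE
  have hpE : ∀ j, j ≠ i → p j ≤ E := by
    intro j hj
    have hle : Real.exp (β * ⟪x i, ξ⟫) ≤ ∑ k, Real.exp (β * ⟪x k, ξ⟫) :=
      Finset.single_le_sum (f := fun k => Real.exp (β * ⟪x k, ξ⟫)) (fun k _ => (Real.exp_pos _).le) (Finset.mem_univ i)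
    have h1 : p j ≤ Real.exp (β * ⟪x j, ξ⟫ - β * ⟪x i, ξ⟫) := by
      rw [Real.exp_sub]
      exact div_le_div_of_nonneg_left (Real.exp_pos _).le (Real.exp_pos _) hle
    refine le_trans h1 (Real.exp_le_exp.mpr ?_)
    have hΔj : Δ ≤ ⟪x i, x i⟫ - ⟪x i, x j⟫ := hΔ.2 ⟨j, hj, rfl⟩
    have hc : ⟪x j - x i, ξ - x i⟫ ≤ 2 * M * ‖ξ - x i‖ := by
      calc ⟪x j - x i, ξ - x i⟫ ≤ ‖x j - x i‖ * ‖ξ - x i‖ := real_inner_le_norm _ _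
        _ ≤ 2 * M * ‖ξ - x i‖ := mul_le_mul_of_nonneg_right (hxx j) (norm_nonneg _)
    have expand : ⟪x j, ξ⟫ - ⟪x i, ξ⟫
        = (⟪x i, x j⟫ - ⟪x i, x i⟫) + ⟪x j - x i, ξ - x i⟫ := by
      simp only [inner_sub_left, inner_sub_right]
      rw [real_inner_comm (x j) (x i)]
      ring
    have h3 : ⟪x j, ξ⟫ - ⟪x i, ξ⟫ ≤ -(Δ - 2 * M * ‖ξ - x i‖) := by
      rw [expand]; linarith
    nlinarith [mul_le_mul_of_nonneg_left h3 hβ.le]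
  have key : hopfieldUpdate x β ξ - x i = ∑ j, p j • (x j - x i) := by
    have : x i = (∑ j, p j) • x i := by rw [hsum, one_smul]
    rw [hopfieldUpdate]
    conv_lhs => rw [this]
    rw [Finset.sum_smul, ← Finset.sum_sub_distrib]
    exact Finset.sum_congr rfl fun j _ => (smul_sub _ _ _).symm
  rw [key]
  have hE0 : 0 ≤ E := (Real.exp_pos _).le
  have hcard : ((Finset.univ.erase i).card : ℝ) = (N : ℝ) - 1 := by
    rw [Finset.card_erase_of_mem (Finset.mem_univ i)]
    simp [Nat.cast_sub (le_trans one_le_two hN)]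
  calc ‖∑ j, p j • (x j - x i)‖ ≤ ∑ j, ‖p j • (x j - x i)‖ := norm_sum_le _ _
    _ = ∑ j, p j * ‖x j - x i‖ := by
        refine Finset.sum_congr rfl fun j _ => ?_
        rw [norm_smul, Real.norm_eq_abs, abs_of_nonneg (hpnn j)]
    _ = ∑ j ∈ Finset.univ.erase i, p j * ‖x j - x i‖ := by
        rw [Finset.sum_erase]
        simp
    _ ≤ ∑ j ∈ Finset.univ.erase i, E * (2 * M) := by
        refine Finset.sum_le_sum fun j hj => ?_
        exact mul_le_mul (hpE j (Finset.ne_of_mem_erase hj)) (hxx j) (norm_nonneg _) hE0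
    _ = ((Finset.univ.erase i).card : ℝ) * (E * (2 * M)) := by
        rw [Finset.sum_const, nsmul_eq_mul]
    _ = 2 * M * ((N : ℝ) - 1) * E := by rw [hcard]; ring
end

section
/- Let N ≥ 2, fix an index i, let ξ ∈ ℝ^d, and let x_i* ∈ ℝ^d be a fixed point of f (f(x_i*) = x_i*). Set δ = max{‖ξ − x_i‖, ‖x_i* − x_i‖}. Then the retrieval error of pattern x_i after one update is bounded by ‖f(ξ) − x_i‖ ≤ 2 (N − 1) · exp(−β (Δ_i − 2 δ M)) · M. -/
open scoped BigOperators RealInnerProductSpace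

/-- For N ≥ 2, index i, ξ, and a fixed point x_i* of f, with
δ = max{‖ξ − x_i‖, ‖x_i* − x_i‖}, the retrieval error of pattern x_i after one update satisfies
‖f(ξ) − x_i‖ ≤ 2 (N − 1) · exp(−β (Δ_i − 2 δ M)) · M. -/
theorem retrieval_error_bound_fixedPoint
    {d N : ℕ} (hN : 2 ≤ N) (x : Fin N → EuclideanSpace ℝ (Fin d)) (β M Δ : ℝ)
    (hβ : 0 < β)
    (hM : IsGreatest (Set.range fun i => ‖x i‖) M)
    (i : Fin N)
    (hΔ : IsLeast {v : ℝ | ∃ j, j ≠ i ∧ v = ⟪x i, x i⟫ - ⟪x i, x j⟫} Δ)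
    (ξ xstar : EuclideanSpace ℝ (Fin d))
    (hfix : hopfieldUpdate x β xstar = xstar) :
    ‖hopfieldUpdate x β ξ - x i‖
      ≤ 2 * ((N : ℝ) - 1) *
          Real.exp (-β * (Δ - 2 * max ‖ξ - x i‖ ‖xstar - x i‖ * M)) * M := by
  classical
  have hNe : (Finset.univ : Finset (Fin N)).Nonempty := ⟨i, Finset.mem_univ i⟩
  set δ := max ‖ξ - x i‖ ‖xstar - x i‖ with hδ
  have hδξ : ‖ξ - x i‖ ≤ δ := le_max_left _ _
  have hδ0 : 0 ≤ δ := le_trans (norm_nonneg _) hδξ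
  have hMi : ‖x i‖ ≤ M := hM.2 ⟨i, rfl⟩
  have hM0 : 0 ≤ M := le_trans (norm_nonneg _) hMi
  set v : Fin N → ℝ := fun j => β * ⟪x j, ξ⟫ with hv
  have hZpos : 0 < ∑ k, Real.exp (v k) :=
    Finset.sum_pos (fun k _ => Real.exp_pos _) hNe
  have hsum1 : ∑ j, softmax v j = 1 := by
    simp only [softmax, ← Finset.sum_div]
    exact div_self hZpos.ne'
  have hnn : ∀ j, 0 ≤ softmax v j := fun j =>
    div_nonneg (Real.exp_pos _).le hZpos.le
  set E := Real.exp (-β * (Δ - 2 * δ * M)) with hE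
  have hE0 : 0 ≤ E := Real.exp_nonneg _
  have hnormsub : ∀ j, ‖x j - x i‖ ≤ 2 * M := by
    intro j
    calc ‖x j - x i‖ ≤ ‖x j‖ + ‖x i‖ := norm_sub_le _ _
      _ ≤ M + M := add_le_add (hM.2 ⟨j, rfl⟩) hMi
      _ = 2 * M := by ring
  have hterm : ∀ j, softmax v j * ‖x j - x i‖ ≤
      (if j = i then 0 else E * (2 * M)) := by
    intro j
    by_cases hji : j = i
    · simp [hji]
    · simp only [hji, if_false]
      have h1 : softmax v j ≤ Real.exp (v j - v i) := by
        rw [Real.exp_sub, softmax]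
        have hiZ : Real.exp (v i) ≤ ∑ k, Real.exp (v k) :=
          Finset.single_le_sum (fun k _ => (Real.exp_pos (v k)).le) (Finset.mem_univ i)
        exact div_le_div_of_nonneg_left (Real.exp_pos _).le (Real.exp_pos _) hiZ
      have hA : ⟪x j - x i, x i⟫ ≤ -Δ := by
        have hmem : (⟪x i, x i⟫ - ⟪x i, x j⟫ : ℝ) ∈
            {v : ℝ | ∃ j, j ≠ i ∧ v = ⟪x i, x i⟫ - ⟪x i, x j⟫} := ⟨j, hji, rfl⟩
        have := hΔ.2 hmem
        have hcomm : ⟪x j - x i, x i⟫ = ⟪x i, x j⟫ - ⟪x i, x i⟫ := by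
          rw [inner_sub_left, real_inner_comm (x j) (x i)]
        linarith
      have hB : ⟪x j - x i, ξ - x i⟫ ≤ 2 * M * δ := by
        calc ⟪x j - x i, ξ - x i⟫ ≤ ‖x j - x i‖ * ‖ξ - x i‖ := real_inner_le_norm _ _
          _ ≤ (2 * M) * δ := mul_le_mul (hnormsub j) hδξ (norm_nonneg _)
              (by positivity)
      have h2 : v j - v i ≤ -β * (Δ - 2 * δ * M) := by
        have hsub : (⟪x j, ξ⟫ : ℝ) - ⟪x i, ξ⟫ = ⟪x j - x i, ξ⟫ :=
          (inner_sub_left _ _ _).symm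
        have hsplit : (⟪x j - x i, ξ⟫ : ℝ) = ⟪x j - x i, x i⟫ + ⟪x j - x i, ξ - x i⟫ := by
          rw [inner_sub_right]; ring
        have hinner : (⟪x j, ξ⟫ : ℝ) - ⟪x i, ξ⟫ ≤ -Δ + 2 * M * δ := by
          rw [hsub, hsplit]; exact add_le_add hA hB
        have hvv : v j - v i = β * (⟪x j, ξ⟫ - ⟪x i, ξ⟫) := by
          simp only [hv]; ring
        rw [hvv]
        nlinarith [hβ.le]
      calc softmax v j * ‖x j - x i‖ ≤ Real.exp (v j - v i) * (2 * M) :=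
            mul_le_mul h1 (hnormsub j) (norm_nonneg _) (Real.exp_nonneg _)
        _ ≤ E * (2 * M) := by
            apply mul_le_mul_of_nonneg_right _ (by positivity)
            exact Real.exp_le_exp.mpr h2
  have hrepr : hopfieldUpdate x β ξ - x i = ∑ j, softmax v j • (x j - x i) := by
    have hxi : (∑ j, softmax v j • x i) = x i := by
      rw [← Finset.sum_smul, hsum1, one_smul]
    have hupd : hopfieldUpdate x β ξ = ∑ j, softmax v j • x j := rfl
    have hdistrib : (∑ j, softmax v j • (x j - x i))
        = (∑ j, softmax v j • x j) - ∑ j, softmax v j • x i := by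
      rw [← Finset.sum_sub_distrib]
      exact Finset.sum_congr rfl fun j _ => smul_sub _ _ _
    rw [hupd, hdistrib, hxi]
  have hnorm : ‖hopfieldUpdate x β ξ - x i‖ ≤ ∑ j, softmax v j * ‖x j - x i‖ := by
    rw [hrepr]
    refine le_trans (norm_sum_le _ _) (le_of_eq ?_)
    congr 1; funext j
    rw [norm_smul, Real.norm_of_nonneg (hnn j)]
  have hsumbound : (∑ j, softmax v j * ‖x j - x i‖) ≤ ((N : ℝ) - 1) * (E * (2 * M)) := by
    calc (∑ j, softmax v j * ‖x j - x i‖)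
        ≤ ∑ j, (if j = i then 0 else E * (2 * M)) :=
          Finset.sum_le_sum (fun j _ => hterm j)
      _ = ((N : ℝ) - 1) * (E * (2 * M)) := by
          have h1 : (∑ j : Fin N, (if j = i then E * (2 * M) else 0)) = E * (2 * M) := by
            simp
          have h2 : ∀ j : Fin N, (if j = i then (0:ℝ) else E * (2 * M))
              = E * (2 * M) - (if j = i then E * (2 * M) else 0) := by
            intro j; by_cases h : j = i <;> simp [h]
          rw [Finset.sum_congr rfl (fun j _ => h2 j), Finset.sum_sub_distrib, h1,
            Finset.sum_const, Finset.card_univ, Fintype.card_fin, nsmul_eq_mul]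
          ring
  calc ‖hopfieldUpdate x β ξ - x i‖ ≤ ((N : ℝ) - 1) * (E * (2 * M)) :=
        le_trans hnorm hsumbound
    _ = 2 * ((N : ℝ) - 1) * E * M := by ring
end

section
/- Let N ≥ 2 and fix an index i. Then for every ξ' ∈ ℝ^d the spectral norm of the Jacobian of the Hopfield update rule satisfies ‖Df(ξ')‖₂ ≤ 2 β N M² (N − 1) · exp(−β (Δ_i − 2 M ‖ξ' − x_i‖)). -/
open scoped BigOperators RealInnerProductSpace

private lemma inv_comp_fderiv {E : Type*} [NormedAddCommGroup E] [NormedSpace ℝ E]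
    {f : E → ℝ} {f' : E →L[ℝ] ℝ} {x : E} (hf : HasFDerivAt f f' x) (h0 : f x ≠ 0) :
    HasFDerivAt (fun y => (f y)⁻¹) ((-(f x ^ 2)⁻¹) • f') x := by
  have h := (hasFDerivAt_inv (𝕜 := ℝ) h0).comp x hf
  refine h.congr_fderiv ?_
  ext h'
  simp [mul_comm]

private lemma scalar_id (β ej S a T : ℝ) (hS : S ≠ 0) :
    β * ej / S ^ 2 * (S * a) - β * ej / S ^ 2 * T
      = ej * (-(S ^ 2)⁻¹ * (β * T)) + S⁻¹ * (ej * (β * a)) := by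
  field_simp
  ring

private lemma scalar_id2 (β ej ek S aj ak : ℝ) (hS : S ≠ 0) :
    β * (ej / S) * (ek / S) * (aj - ak)
      = β * ej / S ^ 2 * (ek * aj) - β * ej / S ^ 2 * (ek * ak) := by
  field_simp

lemma hopfield_hasFDerivAt {d N : ℕ} (hN : 0 < N) (x : Fin N → EuclideanSpace ℝ (Fin d))
    (β : ℝ) (ξ' : EuclideanSpace ℝ (Fin d)) :
    HasFDerivAt (hopfieldUpdate x β)
      (∑ j, (∑ k, (β * softmax (fun m => β * ⟪x m, ξ'⟫) j * softmax (fun m => β * ⟪x m, ξ'⟫) k) •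
          (innerSL ℝ (x j) - innerSL ℝ (x k))).smulRight (x j)) ξ' := by
  classical
  set e : Fin N → ℝ := fun j => Real.exp (β * ⟪x j, ξ'⟫) with he
  set S : ℝ := ∑ k, e k with hSdef
  have hS : 0 < S := Finset.sum_pos (fun k _ => Real.exp_pos _) ⟨⟨0, hN⟩, Finset.mem_univ _⟩
  have hE : ∀ j, HasFDerivAt (fun ξ : EuclideanSpace ℝ (Fin d) => Real.exp (β * ⟪x j, ξ⟫))
      (e j • (β • innerSL ℝ (x j))) ξ' := by
    intro j
    have h1 : HasFDerivAt (fun ξ : EuclideanSpace ℝ (Fin d) => ⟪x j, ξ⟫) (innerSL ℝ (x j)) ξ' :=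
      (innerSL ℝ (x j)).hasFDerivAt
    exact (h1.const_mul β).exp
  have hSd : HasFDerivAt (fun ξ : EuclideanSpace ℝ (Fin d) => ∑ k, Real.exp (β * ⟪x k, ξ⟫))
      (∑ k, e k • (β • innerSL ℝ (x k))) ξ' := HasFDerivAt.fun_sum fun k _ => hE k
  have hInv : HasFDerivAt
      (fun ξ : EuclideanSpace ℝ (Fin d) => (∑ k, Real.exp (β * ⟪x k, ξ⟫))⁻¹)
      ((-(S ^ 2)⁻¹) • (∑ k, e k • (β • innerSL ℝ (x k)))) ξ' :=
    inv_comp_fderiv hSd hS.ne'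
  have hP : ∀ j, HasFDerivAt
      (fun ξ : EuclideanSpace ℝ (Fin d) => softmax (fun m => β * ⟪x m, ξ⟫) j)
      (e j • ((-(S ^ 2)⁻¹) • (∑ k, e k • (β • innerSL ℝ (x k)))) +
        S⁻¹ • (e j • (β • innerSL ℝ (x j)))) ξ' := by
    intro j
    simp only [softmax, div_eq_mul_inv]
    exact (hE j).mul hInv
  have hD : HasFDerivAt (hopfieldUpdate x β)
      (∑ j, (e j • ((-(S ^ 2)⁻¹) • (∑ k, e k • (β • innerSL ℝ (x k)))) +
        S⁻¹ • (e j • (β • innerSL ℝ (x j)))).smulRight (x j)) ξ' := by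
    unfold hopfieldUpdate
    exact HasFDerivAt.fun_sum fun j _ => (hP j).smul_const (x j)
  have heq : (∑ j, (∑ k, (β * softmax (fun m => β * ⟪x m, ξ'⟫) j *
        softmax (fun m => β * ⟪x m, ξ'⟫) k) • (innerSL ℝ (x j) - innerSL ℝ (x k))).smulRight (x j))
      = ∑ j, (e j • ((-(S ^ 2)⁻¹) • (∑ k, e k • (β • innerSL ℝ (x k)))) +
        S⁻¹ • (e j • (β • innerSL ℝ (x j)))).smulRight (x j) := by
    refine Finset.sum_congr rfl fun j _ => ?_
    congr 1
    ext h
    simp only [ContinuousLinearMap.sum_apply, ContinuousLinearMap.smul_apply,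
      ContinuousLinearMap.sub_apply, innerSL_apply_apply, ContinuousLinearMap.add_apply,
      smul_eq_mul, softmax]
    show ∑ k : Fin N, β * (e j / S) * (e k / S) * (⟪x j, h⟫ - ⟪x k, h⟫)
        = e j * (-(S ^ 2)⁻¹ * ∑ k, e k * (β * ⟪x k, h⟫)) + S⁻¹ * (e j * (β * ⟪x j, h⟫))
    have h1 : ∀ k : Fin N, β * (e j / S) * (e k / S) * (⟪x j, h⟫ - ⟪x k, h⟫)
        = β * e j / S ^ 2 * (e k * ⟪x j, h⟫) - β * e j / S ^ 2 * (e k * ⟪x k, h⟫) :=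
      fun k => scalar_id2 β (e j) (e k) S ⟪x j, h⟫ ⟪x k, h⟫ hS.ne'
    have hLHS : ∑ k : Fin N, β * (e j / S) * (e k / S) * (⟪x j, h⟫ - ⟪x k, h⟫)
        = β * e j / S ^ 2 * (S * ⟪x j, h⟫) - β * e j / S ^ 2 * ∑ k, e k * ⟪x k, h⟫ := by
      rw [Finset.sum_congr rfl fun k _ => h1 k, Finset.sum_sub_distrib, ← Finset.mul_sum,
        ← Finset.mul_sum, ← Finset.sum_mul, ← hSdef]
    have hR : ∑ k : Fin N, e k * (β * ⟪x k, h⟫) = β * ∑ k, e k * ⟪x k, h⟫ := by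
      rw [Finset.mul_sum]; exact Finset.sum_congr rfl fun k _ => by ring
    rw [hLHS, hR]
    exact scalar_id β (e j) S ⟪x j, h⟫ (∑ k, e k * ⟪x k, h⟫) hS.ne'
  rw [heq]
  exact hD

set_option maxHeartbeats 1000000 in
/-- For N ≥ 2 and index i, for every ξ' the spectral norm of the Jacobian of the
Hopfield update rule satisfies ‖Df(ξ')‖₂ ≤ 2 β N M² (N − 1) · exp(−β (Δ_i − 2 M ‖ξ' − x_i‖)).
(The Jacobian Df(ξ') is the Fréchet derivative of f at ξ', whose operator norm on Euclidean
space is the spectral norm.) -/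
theorem jacobian_spectral_norm_bound
    {d N : ℕ} (hN : 2 ≤ N) (x : Fin N → EuclideanSpace ℝ (Fin d)) (β M Δ : ℝ)
    (hβ : 0 < β)
    (hM : IsGreatest (Set.range fun i => ‖x i‖) M)
    (i : Fin N)
    (hΔ : IsLeast {v : ℝ | ∃ j, j ≠ i ∧ v = ⟪x i, x i⟫ - ⟪x i, x j⟫} Δ)
    (ξ' : EuclideanSpace ℝ (Fin d)) :
    ‖fderiv ℝ (hopfieldUpdate x β) ξ'‖
      ≤ 2 * β * N * M ^ 2 * ((N : ℝ) - 1) *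
          Real.exp (-β * (Δ - 2 * M * ‖ξ' - x i‖)) := by
  classical
  have hN0 : 0 < N := lt_of_lt_of_le (by norm_num) hN
  set p : Fin N → ℝ := fun j => softmax (fun m => β * ⟪x m, ξ'⟫) j with hpdef
  set ε : ℝ := Real.exp (-β * (Δ - 2 * M * ‖ξ' - x i‖)) with hεdef
  have hxM : ∀ j, ‖x j‖ ≤ M := fun j => hM.2 ⟨j, rfl⟩
  have hM0 : 0 ≤ M := le_trans (norm_nonneg (x i)) (hxM i)
  have hε0 : 0 ≤ ε := (Real.exp_pos _).le
  have hS : 0 < ∑ k, Real.exp (β * ⟪x k, ξ'⟫) :=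
    Finset.sum_pos (fun k _ => Real.exp_pos _) ⟨i, Finset.mem_univ _⟩
  have hp0 : ∀ j, 0 ≤ p j := fun j => div_nonneg (Real.exp_pos _).le hS.le
  have hp1 : ∀ j, p j ≤ 1 := by
    intro j
    show Real.exp (β * ⟪x j, ξ'⟫) / ∑ k, Real.exp (β * ⟪x k, ξ'⟫) ≤ 1
    rw [div_le_one hS]
    exact Finset.single_le_sum (f := fun k => Real.exp (β * ⟪x k, ξ'⟫))
      (fun k _ => (Real.exp_pos _).le) (Finset.mem_univ j)
  have hkey : ∀ m, m ≠ i → p m ≤ ε := by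
    intro m hm
    have hd : Δ ≤ ⟪x i, x i⟫ - ⟪x i, x m⟫ := hΔ.2 ⟨m, hm, rfl⟩
    have hnorm : ‖x m - x i‖ ≤ 2 * M :=
      le_trans (norm_sub_le _ _) (by linarith [hxM m, hxM i])
    have h2 : ⟪x m - x i, ξ' - x i⟫ ≤ 2 * M * ‖ξ' - x i‖ :=
      le_trans (real_inner_le_norm _ _)
        (mul_le_mul_of_nonneg_right hnorm (norm_nonneg _))
    have h1 : ⟪x m, ξ'⟫ - ⟪x i, ξ'⟫
        = ⟪x m - x i, ξ' - x i⟫ + (⟪x i, x m⟫ - ⟪x i, x i⟫) := by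
      simp only [inner_sub_left, inner_sub_right]
      rw [real_inner_comm (x m) (x i)]
      ring
    have hexp : β * ⟪x m, ξ'⟫ - β * ⟪x i, ξ'⟫ ≤ -β * (Δ - 2 * M * ‖ξ' - x i‖) := by
      have hAB : ⟪x m, ξ'⟫ - ⟪x i, ξ'⟫ ≤ 2 * M * ‖ξ' - x i‖ - Δ := by linarith
      nlinarith [mul_le_mul_of_nonneg_left hAB hβ.le]
    calc p m = Real.exp (β * ⟪x m, ξ'⟫) / ∑ k, Real.exp (β * ⟪x k, ξ'⟫) := rfl
      _ ≤ Real.exp (β * ⟪x m, ξ'⟫) / Real.exp (β * ⟪x i, ξ'⟫) := by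
          exact div_le_div_of_nonneg_left (Real.exp_pos _).le (Real.exp_pos _)
            (Finset.single_le_sum (f := fun k => Real.exp (β * ⟪x k, ξ'⟫))
              (fun k _ => (Real.exp_pos _).le) (Finset.mem_univ i))
      _ = Real.exp (β * ⟪x m, ξ'⟫ - β * ⟪x i, ξ'⟫) := (Real.exp_sub _ _).symm
      _ ≤ ε := Real.exp_le_exp.mpr hexp
  have hpair : ∀ j k : Fin N, j ≠ k → p j * p k ≤ ε := by
    intro j k hjk
    by_cases hj : j = i
    · have hk : k ≠ i := fun hki => hjk (hj.trans hki.symm)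
      calc p j * p k ≤ 1 * ε :=
            mul_le_mul (hp1 j) (hkey k hk) (hp0 k) (by norm_num)
        _ = ε := one_mul ε
    · calc p j * p k ≤ ε * 1 :=
            mul_le_mul (hkey j hj) (hp1 k) (hp0 k) hε0
        _ = ε := mul_one ε
  rw [(hopfield_hasFDerivAt hN0 x β ξ').fderiv]
  have hC : 0 ≤ 2 * β * N * M ^ 2 * ((N : ℝ) - 1) * ε := by
    have hN1 : (1 : ℝ) ≤ (N : ℝ) := by exact_mod_cast hN0
    have : (0:ℝ) ≤ (N : ℝ) - 1 := by linarith
    positivity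
  refine ContinuousLinearMap.opNorm_le_bound _ hC fun h => ?_
  set c : ℝ := 2 * β * M ^ 2 * ε * ‖h‖ with hcdef
  have hc0 : 0 ≤ c := by positivity
  have happ : ∀ j : Fin N,
      ((∑ k, (β * p j * p k) • (innerSL ℝ (x j) - innerSL ℝ (x k))).smulRight (x j)) h
        = (∑ k, β * p j * p k * (⟪x j, h⟫ - ⟪x k, h⟫)) • x j := by
    intro j
    simp [ContinuousLinearMap.sum_apply, ContinuousLinearMap.smulRight_apply,
      ContinuousLinearMap.smul_apply, ContinuousLinearMap.sub_apply, innerSL_apply_apply,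
      smul_eq_mul]
  calc ‖(∑ j, (∑ k, (β * p j * p k) • (innerSL ℝ (x j) - innerSL ℝ (x k))).smulRight (x j)) h‖
      = ‖∑ j, (∑ k, β * p j * p k * (⟪x j, h⟫ - ⟪x k, h⟫)) • x j‖ := by
        rw [ContinuousLinearMap.sum_apply]
        congr 1
        exact Finset.sum_congr rfl fun j _ => happ j
    _ ≤ ∑ j, ‖(∑ k, β * p j * p k * (⟪x j, h⟫ - ⟪x k, h⟫)) • x j‖ := norm_sum_le _ _
    _ ≤ ∑ j : Fin N, ∑ k : Fin N, (if j = k then 0 else c) := by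
        refine Finset.sum_le_sum fun j _ => ?_
        rw [norm_smul, Real.norm_eq_abs]
        calc |∑ k, β * p j * p k * (⟪x j, h⟫ - ⟪x k, h⟫)| * ‖x j‖
            ≤ (∑ k, |β * p j * p k * (⟪x j, h⟫ - ⟪x k, h⟫)|) * ‖x j‖ :=
              mul_le_mul_of_nonneg_right (Finset.abs_sum_le_sum_abs _ _) (norm_nonneg _)
          _ = ∑ k, |β * p j * p k * (⟪x j, h⟫ - ⟪x k, h⟫)| * ‖x j‖ := Finset.sum_mul _ _ _
          _ ≤ ∑ k : Fin N, (if j = k then 0 else c) := by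
              refine Finset.sum_le_sum fun k _ => ?_
              by_cases hjk : j = k
              · simp [hjk]
              · simp only [hjk, if_false]
                have ha : |⟪x j, h⟫ - ⟪x k, h⟫| ≤ 2 * M * ‖h‖ := by
                  rw [← inner_sub_left]
                  refine le_trans (abs_real_inner_le_norm _ _) ?_
                  have : ‖x j - x k‖ ≤ 2 * M :=
                    le_trans (norm_sub_le _ _) (by linarith [hxM j, hxM k])
                  exact mul_le_mul_of_nonneg_right this (norm_nonneg _)
                have hpp : p j * p k ≤ ε := hpair j k hjk
                have hpp0 : 0 ≤ p j * p k := mul_nonneg (hp0 j) (hp0 k)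
                have habs : |β * p j * p k * (⟪x j, h⟫ - ⟪x k, h⟫)|
                    = β * (p j * p k) * |⟪x j, h⟫ - ⟪x k, h⟫| := by
                  rw [abs_mul, abs_mul, abs_mul, abs_of_pos hβ, abs_of_nonneg (hp0 j),
                    abs_of_nonneg (hp0 k)]
                  ring
                rw [habs, hcdef]
                calc β * (p j * p k) * |⟪x j, h⟫ - ⟪x k, h⟫| * ‖x j‖
                    ≤ β * ε * (2 * M * ‖h‖) * M := by
                      gcongr
                      exact hxM j
                  _ = 2 * β * M ^ 2 * ε * ‖h‖ := by ring
    _ = (N : ℝ) * (((N : ℝ) - 1) * c) := by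
        have hinner : ∀ j : Fin N, (∑ k : Fin N, (if j = k then (0:ℝ) else c))
            = ((N : ℝ) - 1) * c := by
          intro j
          have h1 : (∑ k : Fin N, (if j = k then (0:ℝ) else c))
              = ∑ k : Fin N, (c - if j = k then c else 0) := by
            refine Finset.sum_congr rfl fun k _ => ?_
            by_cases hjk : j = k <;> simp [hjk]
          rw [h1, Finset.sum_sub_distrib, Finset.sum_const, Finset.sum_ite_eq]
          simp [Finset.card_univ]
          ring
        rw [Finset.sum_congr rfl fun j _ => hinner j, Finset.sum_const, Finset.card_univ]
        simp [nsmul_eq_mul, Fintype.card_fin]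
    _ = 2 * β * ↑N * M ^ 2 * ((N : ℝ) - 1) * ε * ‖h‖ := by rw [hcdef]; ring
end

section
/- Let N ≥ 2, fix an index i, let ξ ∈ ℝ^d, and let x_i* ∈ ℝ^d be a fixed point of f (f(x_i*) = x_i*). Set δ = max{‖ξ − x_i‖, ‖x_i* − x_i‖}. Then for every point ξ' on the line segment joining ξ and x_i*, the spectral norm of the Jacobian satisfies ‖Df(ξ')‖₂ ≤ 2 β N M² (N − 1) · exp(−β (Δ_i − 2 δ M)). -/
open scoped BigOperators RealInnerProductSpace

noncomputable def hopDS {d N : ℕ} (x : Fin N → EuclideanSpace ℝ (Fin d)) (β : ℝ)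
    (ξ' : EuclideanSpace ℝ (Fin d)) : EuclideanSpace ℝ (Fin d) →L[ℝ] ℝ :=
  ∑ k, Real.exp (β * ⟪x k, ξ'⟫) • (β • (innerSL ℝ (x k)))

noncomputable def hopDp {d N : ℕ} (x : Fin N → EuclideanSpace ℝ (Fin d)) (β : ℝ)
    (ξ' : EuclideanSpace ℝ (Fin d)) (j : Fin N) : EuclideanSpace ℝ (Fin d) →L[ℝ] ℝ :=
  Real.exp (β * ⟪x j, ξ'⟫) • ((-(((∑ k, Real.exp (β * ⟪x k, ξ'⟫)) ^ 2)⁻¹)) • hopDS x β ξ')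
    + (∑ k, Real.exp (β * ⟪x k, ξ'⟫))⁻¹ • (Real.exp (β * ⟪x j, ξ'⟫) • (β • (innerSL ℝ (x j))))

lemma hop_hasFDerivAt {d N : ℕ} (x : Fin N → EuclideanSpace ℝ (Fin d)) (β : ℝ)
    (ξ' : EuclideanSpace ℝ (Fin d)) (hN : 0 < N) :
    HasFDerivAt (hopfieldUpdate x β)
      (∑ j, (hopDp x β ξ' j).smulRight (x j)) ξ' := by
  have hS0 : (0:ℝ) < ∑ k, Real.exp (β * ⟪x k, ξ'⟫) :=
    Finset.sum_pos (fun k _ => Real.exp_pos _)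
      (Finset.univ_nonempty_iff.2 (Fin.pos_iff_nonempty.1 hN))
  have hinner : ∀ j : Fin N, HasFDerivAt (fun ξ : EuclideanSpace ℝ (Fin d) => β * ⟪x j, ξ⟫)
      (β • (innerSL ℝ (x j))) ξ' := fun j => (innerSL ℝ (x j)).hasFDerivAt.const_mul β
  have hu : ∀ j : Fin N, HasFDerivAt (fun ξ : EuclideanSpace ℝ (Fin d) => Real.exp (β * ⟪x j, ξ⟫))
      (Real.exp (β * ⟪x j, ξ'⟫) • (β • (innerSL ℝ (x j)))) ξ' := fun j => (hinner j).exp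
  have hSder : HasFDerivAt (fun ξ : EuclideanSpace ℝ (Fin d) => ∑ k, Real.exp (β * ⟪x k, ξ⟫))
      (hopDS x β ξ') ξ' := HasFDerivAt.fun_sum (fun k _ => hu k)
  have hinv : HasFDerivAt (fun ξ : EuclideanSpace ℝ (Fin d) => (∑ k, Real.exp (β * ⟪x k, ξ⟫))⁻¹)
      ((-(((∑ k, Real.exp (β * ⟪x k, ξ'⟫)) ^ 2)⁻¹)) • hopDS x β ξ') ξ' :=
    (hasDerivAt_inv hS0.ne').comp_hasFDerivAt ξ' hSder
  have hp : ∀ j : Fin N, HasFDerivAt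
      (fun ξ : EuclideanSpace ℝ (Fin d) =>
        Real.exp (β * ⟪x j, ξ⟫) * (∑ k, Real.exp (β * ⟪x k, ξ⟫))⁻¹)
      (hopDp x β ξ' j) ξ' := fun j => (hu j).mul hinv
  have hsum : HasFDerivAt
      (fun ξ : EuclideanSpace ℝ (Fin d) => ∑ j,
        (Real.exp (β * ⟪x j, ξ⟫) * (∑ k, Real.exp (β * ⟪x k, ξ⟫))⁻¹) • x j)
      (∑ j, (hopDp x β ξ' j).smulRight (x j)) ξ' :=
    HasFDerivAt.fun_sum (fun j _ => (hp j).smul_const (x j))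
  have hfun : hopfieldUpdate x β = fun ξ => ∑ j,
      (Real.exp (β * ⟪x j, ξ⟫) * (∑ k, Real.exp (β * ⟪x k, ξ⟫))⁻¹) • x j := by
    funext ξ
    simp [hopfieldUpdate, softmax, div_eq_mul_inv]
  rw [hfun]
  exact hsum

set_option maxHeartbeats 1000000 in
/-- For N ≥ 2, index i, ξ, and a fixed point x_i* of f, with
δ = max{‖ξ − x_i‖, ‖x_i* − x_i‖}, for every ξ' on the segment joining ξ and x_i* the
spectral norm of the Jacobian satisfies
‖Df(ξ')‖₂ ≤ 2 β N M² (N − 1) · exp(−β (Δ_i − 2 δ M)). -/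
theorem jacobian_spectral_norm_bound_segment
    {d N : ℕ} (hN : 2 ≤ N) (x : Fin N → EuclideanSpace ℝ (Fin d)) (β M Δ : ℝ)
    (hβ : 0 < β)
    (hM : IsGreatest (Set.range fun i => ‖x i‖) M)
    (i : Fin N)
    (hΔ : IsLeast {v : ℝ | ∃ j, j ≠ i ∧ v = ⟪x i, x i⟫ - ⟪x i, x j⟫} Δ)
    (ξ xstar : EuclideanSpace ℝ (Fin d))
    (hfix : hopfieldUpdate x β xstar = xstar) :
    ∀ ξ' ∈ segment ℝ ξ xstar,
      ‖fderiv ℝ (hopfieldUpdate x β) ξ'‖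
        ≤ 2 * β * N * M ^ 2 * ((N : ℝ) - 1) *
            Real.exp (-β * (Δ - 2 * max ‖ξ - x i‖ ‖xstar - x i‖ * M)) := by
  intro ξ' hξ'
  have hNpos : 0 < N := by omega
  have hN1 : (1:ℝ) ≤ (N:ℝ) := by exact_mod_cast Nat.one_le_of_lt hN
  have hN2 : (2:ℝ) ≤ (N:ℝ) := by exact_mod_cast hN
  have hxM : ∀ j, ‖x j‖ ≤ M := fun j => hM.2 ⟨j, rfl⟩
  have hM0 : 0 ≤ M := le_trans (norm_nonneg (x i)) (hxM i)
  -- segment bound, before introducing abbreviations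
  have hseg : ‖ξ' - x i‖ ≤ max ‖ξ - x i‖ ‖xstar - x i‖ := by
    obtain ⟨a, b, ha, hb, hab, rfl⟩ := hξ'
    have hrw : a • ξ + b • xstar - x i = a • (ξ - x i) + b • (xstar - x i) := by
      have h2 : a • (ξ - x i) + b • (xstar - x i) = a • ξ + b • xstar - (a + b) • x i := by
        module
      rw [h2, hab, one_smul]
    rw [hrw]
    calc ‖a • (ξ - x i) + b • (xstar - x i)‖ ≤ a * ‖ξ - x i‖ + b * ‖xstar - x i‖ := by
          refine (norm_add_le _ _).trans ?_
          rw [norm_smul, norm_smul, Real.norm_of_nonneg ha, Real.norm_of_nonneg hb]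
      _ ≤ a * max ‖ξ - x i‖ ‖xstar - x i‖ + b * max ‖ξ - x i‖ ‖xstar - x i‖ := by
          gcongr
          · exact le_max_left _ _
          · exact le_max_right _ _
      _ = max ‖ξ - x i‖ ‖xstar - x i‖ := by rw [← add_mul, hab, one_mul]
  set u : Fin N → ℝ := fun j => Real.exp (β * ⟪x j, ξ'⟫) with hu_def
  set S : ℝ := ∑ k, Real.exp (β * ⟪x k, ξ'⟫) with hS_def
  have hu_app : ∀ j, Real.exp (β * ⟪x j, ξ'⟫) = u j := fun _ => rfl
  have hu0 : ∀ j, 0 < u j := fun j => Real.exp_pos _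
  have hS0 : 0 < S := by
    rw [hS_def]
    exact Finset.sum_pos (fun k _ => Real.exp_pos _)
      (Finset.univ_nonempty_iff.2 (Fin.pos_iff_nonempty.1 hNpos))
  have hSu : S = ∑ k, u k := hS_def
  set δ : ℝ := max ‖ξ - x i‖ ‖xstar - x i‖ with hδ_def
  set Eb : ℝ := Real.exp (-β * (Δ - 2 * δ * M)) with hE_def
  have hE0 : 0 < Eb := Real.exp_pos _
  have hδ0 : 0 ≤ δ := le_trans (norm_nonneg _) (le_max_left _ _)
  -- key exponential bound
  have hkey : ∀ j, j ≠ i → u j ≤ u i * Eb := by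
    intro j hj
    show Real.exp (β * ⟪x j, ξ'⟫) ≤ Real.exp (β * ⟪x i, ξ'⟫) * Real.exp (-β * (Δ - 2 * δ * M))
    rw [← Real.exp_add]
    apply Real.exp_le_exp.2
    have h1 : Δ ≤ ⟪x i, x i⟫ - ⟪x i, x j⟫ := hΔ.2 ⟨j, hj, rfl⟩
    have h2 : ⟪x j - x i, ξ' - x i⟫ ≤ 2 * δ * M := by
      refine (real_inner_le_norm _ _).trans ?_
      have hn : ‖x j - x i‖ ≤ 2 * M := by
        refine (norm_sub_le _ _).trans ?_
        have := hxM j; have := hxM i; linarith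
      calc ‖x j - x i‖ * ‖ξ' - x i‖ ≤ (2 * M) * δ :=
            mul_le_mul hn hseg (norm_nonneg _) (by positivity)
        _ = 2 * δ * M := by ring
    have h4 : ⟪x j - x i, ξ'⟫ = ⟪x j, ξ'⟫ - ⟪x i, ξ'⟫ := inner_sub_left _ _ _
    have h3 : ⟪x j, ξ'⟫ - ⟪x i, ξ'⟫ = (⟪x i, x j⟫ - ⟪x i, x i⟫) + ⟪x j - x i, ξ' - x i⟫ := by
      rw [← h4]
      have h5 : ⟪x j - x i, ξ' - x i⟫ = ⟪x j - x i, ξ'⟫ - ⟪x j - x i, x i⟫ := inner_sub_right _ _ _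
      have h6 : ⟪x j - x i, x i⟫ = ⟪x j, x i⟫ - ⟪x i, x i⟫ := inner_sub_left _ _ _
      have h7 : ⟪x j, x i⟫ = ⟪x i, x j⟫ := real_inner_comm _ _
      rw [h5, h6, h7]; ring
    have h8 : ⟪x j, ξ'⟫ - ⟪x i, ξ'⟫ ≤ 2 * δ * M - Δ := by linarith
    nlinarith [mul_le_mul_of_nonneg_left h8 hβ.le]
  have hui_le_S : u i ≤ S := by
    rw [hSu]; exact Finset.single_le_sum (fun k _ => (hu0 k).le) (Finset.mem_univ i)
  have hukey : ∀ j, j ≠ i → u j ≤ S * Eb := fun j hj =>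
    (hkey j hj).trans (mul_le_mul_of_nonneg_right hui_le_S hE0.le)
  set t : Fin N → ℝ := fun j => if j = i then 0 else 1 with ht_def
  have ht0 : ∀ j, 0 ≤ t j := by
    intro j; by_cases h : j = i <;> simp [ht_def, h]
  have hsum_t : ∑ k, t k = (N:ℝ) - 1 := by
    have h1 : ∀ k : Fin N, t k = 1 - (if k = i then 1 else 0) := by
      intro k; by_cases h : k = i <;> simp [ht_def, h]
    simp only [h1, Finset.sum_sub_distrib, Finset.sum_const, Finset.card_univ,
      Fintype.card_fin, nsmul_eq_mul, mul_one, Finset.sum_ite_eq', Finset.mem_univ, if_true]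
  have hA : ∑ k, u k * t k ≤ ((N:ℝ) - 1) * (S * Eb) := by
    calc ∑ k, u k * t k ≤ ∑ k, (S * Eb) * t k := by
          refine Finset.sum_le_sum fun k _ => ?_
          by_cases h : k = i
          · simp [ht_def, h]
          · have ht1 : t k = 1 := by simp [ht_def, h]
            rw [ht1, mul_one, mul_one]; exact hukey k h
      _ = (S * Eb) * ∑ k, t k := by rw [Finset.mul_sum]
      _ = ((N:ℝ) - 1) * (S * Eb) := by rw [hsum_t, mul_comm]
  have hnormb : ∀ j k : Fin N, ‖x j - x k‖ ≤ 2 * M * (t j + t k) := by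
    intro j k
    by_cases hj : j = i <;> by_cases hk : k = i
    · simp [hj, hk, ht_def]
    · have h1 : t j = 0 := by simp [ht_def, hj]
      have h2 : t k = 1 := by simp [ht_def, hk]
      rw [h1, h2]
      refine (norm_sub_le _ _).trans ?_
      have := hxM j; have := hxM k; linarith
    · have h1 : t j = 1 := by simp [ht_def, hj]
      have h2 : t k = 0 := by simp [ht_def, hk]
      rw [h1, h2]
      refine (norm_sub_le _ _).trans ?_
      have := hxM j; have := hxM k; linarith
    · have h1 : t j = 1 := by simp [ht_def, hj]
      have h2 : t k = 1 := by simp [ht_def, hk]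
      rw [h1, h2]
      refine (norm_sub_le _ _).trans ?_
      have := hxM j; have := hxM k; linarith
  have hinner_sum : ∀ j, ∑ k, u k * ‖x j - x k‖ ≤ 2 * M * (t j * S + ∑ k, u k * t k) := by
    intro j
    calc ∑ k, u k * ‖x j - x k‖ ≤ ∑ k, u k * (2 * M * (t j + t k)) :=
          Finset.sum_le_sum fun k _ => mul_le_mul_of_nonneg_left (hnormb j k) (hu0 k).le
      _ = ∑ k, (2 * M * t j * u k + 2 * M * (u k * t k)) :=
          Finset.sum_congr rfl fun k _ => by ring
      _ = 2 * M * t j * (∑ k, u k) + 2 * M * ∑ k, u k * t k := by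
          rw [Finset.sum_add_distrib, ← Finset.mul_sum, ← Finset.mul_sum]
      _ = 2 * M * (t j * S + ∑ k, u k * t k) := by rw [← hSu]; ring
  have hdouble : ∑ j, u j * ∑ k, u k * ‖x j - x k‖ ≤ 4 * M * S * (((N:ℝ) - 1) * (S * Eb)) := by
    calc ∑ j, u j * ∑ k, u k * ‖x j - x k‖
        ≤ ∑ j, u j * (2 * M * (t j * S + ∑ k, u k * t k)) :=
          Finset.sum_le_sum fun j _ => mul_le_mul_of_nonneg_left (hinner_sum j) (hu0 j).le
      _ = ∑ j, (2 * M * S * (u j * t j) + 2 * M * (∑ k, u k * t k) * u j) :=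
          Finset.sum_congr rfl fun j _ => by ring
      _ = 2 * M * S * (∑ j, u j * t j) + 2 * M * (∑ k, u k * t k) * (∑ j, u j) := by
          rw [Finset.sum_add_distrib, ← Finset.mul_sum, ← Finset.mul_sum]
      _ = 4 * M * S * (∑ k, u k * t k) := by rw [← hSu]; ring
      _ ≤ 4 * M * S * (((N:ℝ) - 1) * (S * Eb)) := by
          apply mul_le_mul_of_nonneg_left hA
          exact mul_nonneg (mul_nonneg (by norm_num) hM0) hS0.le
  rw [(hop_hasFDerivAt x β ξ' hNpos).fderiv]
  have hNm1 : (0:ℝ) ≤ (N:ℝ) - 1 := by linarith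
  have hC0 : 0 ≤ 2 * β * (N:ℝ) * M ^ 2 * ((N:ℝ) - 1) * Eb := by positivity
  refine ContinuousLinearMap.opNorm_le_bound _ hC0 fun h => ?_
  have hDp_apply : ∀ j, (hopDp x β ξ' j) h
      = β * (S⁻¹ * S⁻¹) * (u j * ∑ k, u k * (⟪x j, h⟫ - ⟪x k, h⟫)) := by
    intro j
    have e1 : ∑ k, u k * (β * ⟪x k, h⟫) = β * ∑ k, u k * ⟪x k, h⟫ := by
      rw [Finset.mul_sum]; exact Finset.sum_congr rfl fun k _ => by ring
    have e2 : ∑ k, u k * (⟪x j, h⟫ - ⟪x k, h⟫)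
        = S * ⟪x j, h⟫ - ∑ k, u k * ⟪x k, h⟫ := by
      rw [hSu]
      simp only [mul_sub, Finset.sum_sub_distrib, ← Finset.sum_mul]
    simp only [hopDp, hopDS, ContinuousLinearMap.add_apply, ContinuousLinearMap.smul_apply,
      ContinuousLinearMap.sum_apply, innerSL_apply_apply, smul_eq_mul]
    rw [← hS_def]
    simp only [hu_app]
    rw [e1, e2]
    field_simp
    ring
  have hDpb : ∀ j, ‖(hopDp x β ξ' j) h‖ * ‖x j‖
      ≤ (β * (S⁻¹ * S⁻¹) * (u j * ∑ k, u k * ‖x j - x k‖) * ‖h‖) * M := by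
    intro j
    apply mul_le_mul ?_ (hxM j) (norm_nonneg _) (mul_nonneg (mul_nonneg (mul_nonneg hβ.le (mul_self_nonneg _)) (mul_nonneg (hu0 j).le (Finset.sum_nonneg fun k _ => mul_nonneg (hu0 k).le (norm_nonneg _)))) (norm_nonneg _))
    rw [hDp_apply j]
    have hSig : |∑ k, u k * (⟪x j, h⟫ - ⟪x k, h⟫)| ≤ ∑ k, u k * (‖x j - x k‖ * ‖h‖) := by
      refine (Finset.abs_sum_le_sum_abs _ _).trans (Finset.sum_le_sum fun k _ => ?_)
      rw [abs_mul, abs_of_pos (hu0 k)]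
      refine mul_le_mul_of_nonneg_left ?_ (hu0 k).le
      rw [← inner_sub_left]
      exact abs_real_inner_le_norm _ _
    have hpull : ∑ k, u k * (‖x j - x k‖ * ‖h‖) = (∑ k, u k * ‖x j - x k‖) * ‖h‖ := by
      rw [Finset.sum_mul]; exact Finset.sum_congr rfl fun k _ => by ring
    rw [Real.norm_eq_abs, abs_mul, abs_of_nonneg (show (0:ℝ) ≤ β * (S⁻¹ * S⁻¹) from mul_nonneg hβ.le (mul_self_nonneg _)),
      abs_mul (u j), abs_of_pos (hu0 j)]
    calc β * (S⁻¹ * S⁻¹) * (u j * |∑ k, u k * (⟪x j, h⟫ - ⟪x k, h⟫)|)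
        ≤ β * (S⁻¹ * S⁻¹) * (u j * ((∑ k, u k * ‖x j - x k‖) * ‖h‖)) := by
          refine mul_le_mul_of_nonneg_left (mul_le_mul_of_nonneg_left ?_ (hu0 j).le) (mul_nonneg hβ.le (mul_self_nonneg _))
          exact hSig.trans_eq hpull
      _ = β * (S⁻¹ * S⁻¹) * (u j * ∑ k, u k * ‖x j - x k‖) * ‖h‖ := by ring
  calc ‖(∑ j, (hopDp x β ξ' j).smulRight (x j)) h‖
      = ‖∑ j, (hopDp x β ξ' j) h • x j‖ := by
        simp only [ContinuousLinearMap.sum_apply, ContinuousLinearMap.smulRight_apply]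
    _ ≤ ∑ j, ‖(hopDp x β ξ' j) h‖ * ‖x j‖ :=
        (norm_sum_le _ _).trans (le_of_eq (Finset.sum_congr rfl fun j _ => norm_smul _ _))
    _ ≤ ∑ j, (β * (S⁻¹ * S⁻¹) * (u j * ∑ k, u k * ‖x j - x k‖) * ‖h‖) * M :=
        Finset.sum_le_sum fun j _ => hDpb j
    _ = (β * (S⁻¹ * S⁻¹) * M * ‖h‖) * ∑ j, u j * ∑ k, u k * ‖x j - x k‖ := by
        rw [Finset.mul_sum]; exact Finset.sum_congr rfl fun j _ => by ring
    _ ≤ (β * (S⁻¹ * S⁻¹) * M * ‖h‖) * (4 * M * S * (((N:ℝ) - 1) * (S * Eb))) := by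
        refine mul_le_mul_of_nonneg_left hdouble (mul_nonneg (mul_nonneg (mul_nonneg hβ.le (mul_self_nonneg _)) hM0) (norm_nonneg _))
    _ = (4 * β * M ^ 2 * ((N:ℝ) - 1) * Eb * ‖h‖) * ((S⁻¹ * S) * (S⁻¹ * S)) := by ring
    _ = 4 * β * M ^ 2 * ((N:ℝ) - 1) * Eb * ‖h‖ := by
        rw [inv_mul_cancel₀ hS0.ne']; ring
    _ ≤ 2 * β * (N:ℝ) * M ^ 2 * ((N:ℝ) - 1) * Eb * ‖h‖ := by
        have hpos : (0:ℝ) ≤ β * M ^ 2 * ((N:ℝ) - 1) * Eb * ‖h‖ := by positivity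
        nlinarith [hpos, hN2]
end

section
/- Let N ≥ 2, fix an index i, let ξ ∈ ℝ^d, and let x_i* ∈ ℝ^d be a fixed point of f (f(x_i*) = x_i*). Set δ = max{‖ξ − x_i‖, ‖x_i* − x_i‖}. Then after one update the distance of the new point f(ξ) to the fixed point x_i* satisfies ‖f(ξ) − x_i*‖ ≤ 2 β N M² (N − 1) · exp(−β (Δ_i − 2 δ M)) · ‖ξ − x_i*‖. -/
open scoped BigOperators RealInnerProductSpace

lemma sum_exp_pos {N : ℕ} [NeZero N] (v : Fin N → ℝ) :
    0 < ∑ k, Real.exp (v k) :=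
  Finset.sum_pos (fun k _ => Real.exp_pos _) Finset.univ_nonempty

lemma softmax_nonneg {N : ℕ} [NeZero N] (v : Fin N → ℝ) (j : Fin N) :
    0 ≤ softmax v j :=
  div_nonneg (Real.exp_pos _).le (sum_exp_pos v).le

lemma softmax_sum_one {N : ℕ} [NeZero N] (v : Fin N → ℝ) :
    ∑ j, softmax v j = 1 := by
  unfold softmax
  rw [← Finset.sum_div, div_self (sum_exp_pos v).ne']

/-- Ratio bound: if the logits differ by at most `c`, softmax values differ by a factor
`exp (2c)` at most. -/
lemma softmax_ratio {N : ℕ} [NeZero N] (u v : Fin N → ℝ) (c : ℝ)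
    (h : ∀ k, |u k - v k| ≤ c) (j : Fin N) :
    Real.exp (-(2 * c)) * softmax u j ≤ softmax v j := by
  have hSu : 0 < ∑ k, Real.exp (u k) := sum_exp_pos u
  have hSv : 0 < ∑ k, Real.exp (v k) := sum_exp_pos v
  unfold softmax
  rw [mul_div_assoc', div_le_div_iff₀ hSu hSv]
  have h1 : ∑ k, Real.exp (v k) ≤ Real.exp c * ∑ k, Real.exp (u k) := by
    rw [Finset.mul_sum]
    refine Finset.sum_le_sum fun k _ => ?_
    rw [← Real.exp_add]
    exact Real.exp_le_exp.mpr (by linarith [(abs_le.mp (h k)).1])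
  have h3 : Real.exp (u j - c) ≤ Real.exp (v j) :=
    Real.exp_le_exp.mpr (by linarith [(abs_le.mp (h j)).2])
  calc Real.exp (-(2 * c)) * Real.exp (u j) * ∑ k, Real.exp (v k)
      ≤ Real.exp (-(2 * c)) * Real.exp (u j) * (Real.exp c * ∑ k, Real.exp (u k)) :=
        mul_le_mul_of_nonneg_left h1 (by positivity)
    _ = (Real.exp (-(2 * c)) * Real.exp (u j) * Real.exp c) * ∑ k, Real.exp (u k) := by ring
    _ = Real.exp (u j - c) * ∑ k, Real.exp (u k) := by
        rw [← Real.exp_add, ← Real.exp_add]; ring_nf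
    _ ≤ Real.exp (v j) * ∑ k, Real.exp (u k) := mul_le_mul_of_nonneg_right h3 hSu.le

/-- Lipschitz-type bound on softmax differences. -/
lemma softmax_diff {N : ℕ} [NeZero N] (u v : Fin N → ℝ) (c : ℝ) (hc : 0 ≤ c)
    (h : ∀ k, |u k - v k| ≤ c) (j : Fin N) :
    |softmax u j - softmax v j| ≤ 2 * c * max (softmax u j) (softmax v j) := by
  have h1 := softmax_ratio u v c h j
  have h2 := softmax_ratio v u c (fun k => by rw [abs_sub_comm]; exact h k) j
  have hp : 0 ≤ softmax u j := softmax_nonneg u j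
  have hq : 0 ≤ softmax v j := softmax_nonneg v j
  have he : 1 - Real.exp (-(2 * c)) ≤ 2 * c := by
    nlinarith [Real.add_one_le_exp (-(2 * c))]
  have he0 : 0 ≤ Real.exp (-(2 * c)) := (Real.exp_pos _).le
  rcases le_total (softmax u j) (softmax v j) with hle | hle
  · rw [abs_of_nonpos (by linarith), max_eq_right hle]
    nlinarith
  · rw [abs_of_nonneg (by linarith), max_eq_left hle]
    nlinarith

set_option maxHeartbeats 1000000 in
/-- Concentration of softmax away from a well-separated pattern. -/
lemma softmax_le_sep {d N : ℕ} [NeZero N] (x : Fin N → EuclideanSpace ℝ (Fin d))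
    (β M Δ δ : ℝ) (hβ : 0 ≤ β) (hxM : ∀ k, ‖x k‖ ≤ M)
    (i j : Fin N) (hj : j ≠ i)
    (hΔ : Δ ≤ ⟪x i, x i⟫ - ⟪x i, x j⟫)
    (y : EuclideanSpace ℝ (Fin d)) (hy : ‖y - x i‖ ≤ δ) :
    softmax (fun k => β * ⟪x k, y⟫) j ≤ Real.exp (-β * (Δ - 2 * δ * M)) := by
  have hM0 : 0 ≤ M := le_trans (norm_nonneg (x i)) (hxM i)
  have hδ0 : 0 ≤ δ := le_trans (norm_nonneg _) hy
  have hinner : ⟪x j - x i, y - x i⟫ ≤ 2 * δ * M := by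
    calc ⟪x j - x i, y - x i⟫ ≤ ‖x j - x i‖ * ‖y - x i‖ := real_inner_le_norm _ _
      _ ≤ (2 * M) * δ := by
          refine mul_le_mul ?_ hy (norm_nonneg _) (by positivity)
          calc ‖x j - x i‖ ≤ ‖x j‖ + ‖x i‖ := norm_sub_le _ _
            _ ≤ 2 * M := by linarith [hxM j, hxM i]
      _ = 2 * δ * M := by ring
  have hsplit : ⟪x j, y⟫ - ⟪x i, y⟫ = (⟪x i, x j⟫ - ⟪x i, x i⟫) + ⟪x j - x i, y - x i⟫ := by
    simp only [inner_sub_left, inner_sub_right]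
    rw [real_inner_comm (x j) (x i)]
    ring
  have hexp : β * ⟪x j, y⟫ - β * ⟪x i, y⟫ ≤ -β * (Δ - 2 * δ * M) := by
    have hkey : ⟪x j, y⟫ - ⟪x i, y⟫ ≤ -(Δ - 2 * δ * M) := by
      rw [hsplit]; linarith
    calc β * ⟪x j, y⟫ - β * ⟪x i, y⟫ = β * (⟪x j, y⟫ - ⟪x i, y⟫) := by ring
      _ ≤ β * (-(Δ - 2 * δ * M)) := mul_le_mul_of_nonneg_left hkey hβ
      _ = -β * (Δ - 2 * δ * M) := by ring
  have hS : Real.exp (β * ⟪x i, y⟫) ≤ ∑ k, Real.exp (β * ⟪x k, y⟫) :=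
    Finset.single_le_sum (f := fun k => Real.exp (β * ⟪x k, y⟫))
      (fun k _ => (Real.exp_pos _).le) (Finset.mem_univ i)
  calc softmax (fun k => β * ⟪x k, y⟫) j
      = Real.exp (β * ⟪x j, y⟫) / ∑ k, Real.exp (β * ⟪x k, y⟫) := by simp [softmax]
    _ ≤ Real.exp (β * ⟪x j, y⟫) / Real.exp (β * ⟪x i, y⟫) := by
        gcongr
    _ = Real.exp (β * ⟪x j, y⟫ - β * ⟪x i, y⟫) := (Real.exp_sub _ _).symm
    _ ≤ Real.exp (-β * (Δ - 2 * δ * M)) := Real.exp_le_exp.mpr hexp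

/-- For N ≥ 2, index i, ξ, and a fixed point x_i* of f, with
δ = max{‖ξ − x_i‖, ‖x_i* − x_i‖}, after one update
‖f(ξ) − x_i*‖ ≤ 2 β N M² (N − 1) · exp(−β (Δ_i − 2 δ M)) · ‖ξ − x_i*‖. -/
theorem one_update_contraction
    {d N : ℕ} (hN : 2 ≤ N) (x : Fin N → EuclideanSpace ℝ (Fin d)) (β M Δ : ℝ)
    (hβ : 0 < β)
    (hM : IsGreatest (Set.range fun i => ‖x i‖) M)
    (i : Fin N)
    (hΔ : IsLeast {v : ℝ | ∃ j, j ≠ i ∧ v = ⟪x i, x i⟫ - ⟪x i, x j⟫} Δ)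
    (ξ xstar : EuclideanSpace ℝ (Fin d))
    (hfix : hopfieldUpdate x β xstar = xstar) :
    ‖hopfieldUpdate x β ξ - xstar‖
      ≤ 2 * β * N * M ^ 2 * ((N : ℝ) - 1) *
          Real.exp (-β * (Δ - 2 * max ‖ξ - x i‖ ‖xstar - x i‖ * M)) *
          ‖ξ - xstar‖ := by
  classical
  haveI : NeZero N := ⟨by omega⟩
  set δ := max ‖ξ - x i‖ ‖xstar - x i‖ with hδdef
  set r := ‖ξ - xstar‖ with hrdef
  set E := Real.exp (-β * (Δ - 2 * δ * M)) with hEdef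
  set p : Fin N → ℝ := softmax (fun k => β * ⟪x k, ξ⟫) with hpdef
  set q : Fin N → ℝ := softmax (fun k => β * ⟪x k, xstar⟫) with hqdef
  have hxM : ∀ k, ‖x k‖ ≤ M := fun k => hM.2 ⟨k, rfl⟩
  have hM0 : 0 ≤ M := le_trans (norm_nonneg (x i)) (hxM i)
  have hr0 : 0 ≤ r := norm_nonneg _
  have hE0 : 0 < E := Real.exp_pos _
  -- logits differ by at most β M r
  have hab : ∀ k, |β * ⟪x k, ξ⟫ - β * ⟪x k, xstar⟫| ≤ β * M * r := by
    intro k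
    have : β * ⟪x k, ξ⟫ - β * ⟪x k, xstar⟫ = β * ⟪x k, ξ - xstar⟫ := by
      rw [inner_sub_right]; ring
    rw [this, abs_mul, abs_of_pos hβ]
    have h1 : |⟪x k, ξ - xstar⟫| ≤ ‖x k‖ * ‖ξ - xstar‖ := abs_real_inner_le_norm _ _
    have h2 : ‖x k‖ * ‖ξ - xstar‖ ≤ M * r := by
      apply mul_le_mul_of_nonneg_right (hxM k) (norm_nonneg _)
    rw [mul_assoc]
    exact mul_le_mul_of_nonneg_left (h1.trans h2) hβ.le
  -- per-index difference bound
  have hdiff : ∀ j, |p j - q j| ≤ 2 * (β * M * r) * max (p j) (q j) :=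
    fun j => softmax_diff _ _ (β * M * r) (by positivity) hab j
  -- concentration for j ≠ i
  have hpE : ∀ j, j ≠ i → p j ≤ E := fun j hj =>
    softmax_le_sep x β M Δ δ hβ.le hxM i j hj (hΔ.2 ⟨j, hj, rfl⟩) ξ (le_max_left _ _)
  have hqE : ∀ j, j ≠ i → q j ≤ E := fun j hj =>
    softmax_le_sep x β M Δ δ hβ.le hxM i j hj (hΔ.2 ⟨j, hj, rfl⟩) xstar (le_max_right _ _)
  -- rewrite the update difference
  have hre : hopfieldUpdate x β ξ - xstar = ∑ j, (p j - q j) • (x j - x i) := by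
    conv_lhs => rw [← hfix]
    unfold hopfieldUpdate
    rw [← hpdef, ← hqdef]
    simp only [smul_sub, sub_smul, Finset.sum_sub_distrib]
    rw [← Finset.sum_smul, ← Finset.sum_smul, softmax_sum_one, softmax_sum_one]
    abel
  rw [hre]
  have hti : (p i - q i) • (x i - x i) = 0 := by simp
  have hterm : ∀ j ∈ Finset.univ.erase i,
      ‖(p j - q j) • (x j - x i)‖ ≤ 2 * (β * M * r) * E * (2 * M) := by
    intro j hj
    have hji : j ≠ i := Finset.ne_of_mem_erase hj
    rw [norm_smul, Real.norm_eq_abs]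
    have h1 : |p j - q j| ≤ 2 * (β * M * r) * E := by
      refine (hdiff j).trans ?_
      have : max (p j) (q j) ≤ E := max_le (hpE j hji) (hqE j hji)
      exact mul_le_mul_of_nonneg_left this (by positivity)
    have h2 : ‖x j - x i‖ ≤ 2 * M := by
      calc ‖x j - x i‖ ≤ ‖x j‖ + ‖x i‖ := norm_sub_le _ _
        _ ≤ 2 * M := by linarith [hxM j, hxM i]
    exact mul_le_mul h1 h2 (norm_nonneg _) (by positivity)
  have hcard : (Finset.univ.erase i).card = N - 1 := by
    rw [Finset.card_erase_of_mem (Finset.mem_univ i), Finset.card_univ, Fintype.card_fin]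
  calc ‖∑ j, (p j - q j) • (x j - x i)‖
      = ‖∑ j ∈ Finset.univ.erase i, (p j - q j) • (x j - x i)‖ :=
        congrArg Norm.norm (Finset.sum_erase (f := fun j => (p j - q j) • (x j - x i)) Finset.univ hti).symm
    _ ≤ ∑ j ∈ Finset.univ.erase i, ‖(p j - q j) • (x j - x i)‖ := norm_sum_le _ _
    _ ≤ ∑ _j ∈ Finset.univ.erase i, 2 * (β * M * r) * E * (2 * M) :=
        Finset.sum_le_sum hterm
    _ = ((N : ℝ) - 1) * (2 * (β * M * r) * E * (2 * M)) := by
        rw [Finset.sum_const, hcard, nsmul_eq_mul, Nat.cast_sub (by omega)]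
        norm_num
    _ ≤ 2 * β * N * M ^ 2 * ((N : ℝ) - 1) * E * r := by
        have h4 : (4 : ℝ) ≤ 2 * N := by
          have : (2 : ℝ) ≤ N := by exact_mod_cast hN
          linarith
        have hN1 : (1 : ℝ) ≤ (N : ℝ) - 1 := by
          have : (2 : ℝ) ≤ N := by exact_mod_cast hN
          linarith
        nlinarith [mul_nonneg (mul_nonneg (mul_nonneg (mul_nonneg hβ.le (sq_nonneg M)) hE0.le)
          hr0) (by linarith : (0:ℝ) ≤ (N : ℝ) - 1)]
end

section
/- Let N ≥ 2, M > 0, fix an index i, and suppose the pattern x_i is well-separated, i.e. Δ_i ≥ 2/(β N) + β^{−1} log(2 (N − 1) N β M²). Then the Hopfield update rule maps the closed ball of radius r = 1/(β N M) centered at x_i into itself: for every ξ with ‖ξ − x_i‖ ≤ r one has ‖f(ξ) − x_i‖ ≤ r. -/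
open scoped BigOperators RealInnerProductSpace

/-- For N ≥ 2, M > 0 and a well-separated pattern x_i, i.e.
Δ_i ≥ 2/(β N) + β⁻¹ log(2 (N − 1) N β M²), the update rule maps the closed ball of radius
r = 1/(β N M) centered at x_i into itself. -/
theorem wellSeparated_mapsTo_ball
    {d N : ℕ} (hN : 2 ≤ N) (x : Fin N → EuclideanSpace ℝ (Fin d)) (β M Δ : ℝ)
    (hβ : 0 < β) (hMpos : 0 < M)
    (hM : IsGreatest (Set.range fun i => ‖x i‖) M)
    (i : Fin N)
    (hΔ : IsLeast {v : ℝ | ∃ j, j ≠ i ∧ v = ⟪x i, x i⟫ - ⟪x i, x j⟫} Δ)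
    (hsep : 2 / (β * N) + β⁻¹ * Real.log (2 * ((N : ℝ) - 1) * N * β * M ^ 2) ≤ Δ) :
    ∀ ξ : EuclideanSpace ℝ (Fin d),
      ‖ξ - x i‖ ≤ 1 / (β * N * M) → ‖hopfieldUpdate x β ξ - x i‖ ≤ 1 / (β * N * M) := by
  intro ξ hξ
  have hN1 : (1:ℝ) ≤ (N:ℝ) - 1 := by
    have : (2:ℝ) ≤ (N:ℝ) := by exact_mod_cast hN
    linarith
  have hNpos : (0:ℝ) < (N:ℝ) := by linarith
  set C : ℝ := 2 * ((N : ℝ) - 1) * N * β * M ^ 2 with hC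
  have hCpos : 0 < C := by
    have : (0:ℝ) < (N:ℝ) - 1 := by linarith
    positivity
  set a : Fin N → ℝ := fun j => β * ⟪x j, ξ⟫ with ha
  have hS : 0 < ∑ k, Real.exp (a k) :=
    Finset.sum_pos (fun k _ => Real.exp_pos _) ⟨i, Finset.mem_univ i⟩
  have hpnn : ∀ j, 0 ≤ softmax a j := fun j =>
    div_nonneg (Real.exp_pos _).le hS.le
  have key : ∀ j, j ≠ i → softmax a j ≤ 1 / C := by
    intro j hj
    have hΔj : Δ ≤ ⟪x i, x i⟫ - ⟪x i, x j⟫ := hΔ.2 ⟨j, hj, rfl⟩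
    have hnormj : ‖x j‖ ≤ M := hM.2 ⟨j, rfl⟩
    have hnormi : ‖x i‖ ≤ M := hM.2 ⟨i, rfl⟩
    have hip : |⟪x i - x j, ξ - x i⟫| ≤ 2 / (β * N) := by
      calc |⟪x i - x j, ξ - x i⟫| ≤ ‖x i - x j‖ * ‖ξ - x i‖ := abs_real_inner_le_norm _ _
        _ ≤ (2 * M) * (1 / (β * N * M)) := by
            apply mul_le_mul _ hξ (norm_nonneg _) (by positivity)
            calc ‖x i - x j‖ ≤ ‖x i‖ + ‖x j‖ := norm_sub_le _ _
              _ ≤ 2 * M := by linarith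
        _ = 2 / (β * N) := by field_simp
    have h1 : ⟪x i, ξ⟫ - ⟪x j, ξ⟫ = (⟪x i, x i⟫ - ⟪x i, x j⟫) + ⟪x i - x j, ξ - x i⟫ := by
      simp [inner_sub_left, inner_sub_right, real_inner_comm (x j) (x i)]
    have h2 : Δ - 2 / (β * N) ≤ ⟪x i, ξ⟫ - ⟪x j, ξ⟫ := by
      rw [h1]
      have := (abs_le.mp hip).1
      linarith
    have h3 : β⁻¹ * Real.log C ≤ ⟪x i, ξ⟫ - ⟪x j, ξ⟫ := by linarith
    have hdiff : Real.log C ≤ a i - a j := by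
      have h4 := mul_le_mul_of_nonneg_left h3 hβ.le
      rw [mul_inv_cancel_left₀ hβ.ne'] at h4
      simp only [ha]
      nlinarith
    have hle : Real.exp (a i) ≤ ∑ k, Real.exp (a k) :=
      Finset.single_le_sum (f := fun k => Real.exp (a k))
        (fun k _ => (Real.exp_pos _).le) (Finset.mem_univ i)
    have h5 : softmax a j ≤ Real.exp (a j - a i) := by
      unfold softmax
      rw [Real.exp_sub]
      exact div_le_div_of_nonneg_left (Real.exp_pos _).le (Real.exp_pos _) hle
    have h6 : Real.exp (a j - a i) ≤ 1 / C := by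
      rw [show (1:ℝ)/C = Real.exp (-Real.log C) by
        rw [Real.exp_neg, Real.exp_log hCpos, one_div]]
      exact Real.exp_le_exp.mpr (by linarith)
    linarith
  have hsum : ∑ j, softmax a j = 1 := by
    unfold softmax
    rw [← Finset.sum_div, div_self hS.ne']
  have hrw : hopfieldUpdate x β ξ - x i = ∑ j, softmax a j • (x j - x i) := by
    simp only [hopfieldUpdate, ← ha, smul_sub, Finset.sum_sub_distrib, ← Finset.sum_smul, hsum,
      one_smul]
  rw [hrw]
  have hzero : softmax a i • (x i - x i) = 0 := by simp
  rw [← Finset.sum_erase (f := fun j => softmax a j • (x j - x i)) Finset.univ hzero]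
  have hcard : ((Finset.univ.erase i).card : ℝ) = (N : ℝ) - 1 := by
    rw [Finset.card_erase_of_mem (Finset.mem_univ i)]
    simp [Finset.card_univ]
    have : 1 ≤ N := by omega
    push_cast [this]
    ring
  calc ‖∑ j ∈ Finset.univ.erase i, softmax a j • (x j - x i)‖
      ≤ ∑ j ∈ Finset.univ.erase i, ‖softmax a j • (x j - x i)‖ := norm_sum_le _ _
    _ ≤ ∑ j ∈ Finset.univ.erase i, (1 / C) * (2 * M) := by
        apply Finset.sum_le_sum
        intro j hj
        have hj' : j ≠ i := Finset.ne_of_mem_erase hj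
        rw [norm_smul, Real.norm_eq_abs, abs_of_nonneg (hpnn j)]
        have hb : ‖x j - x i‖ ≤ 2 * M := by
          have hnormj : ‖x j‖ ≤ M := hM.2 ⟨j, rfl⟩
          have hnormi : ‖x i‖ ≤ M := hM.2 ⟨i, rfl⟩
          calc ‖x j - x i‖ ≤ ‖x j‖ + ‖x i‖ := norm_sub_le _ _
            _ ≤ 2 * M := by linarith
        exact mul_le_mul (key j hj') hb (norm_nonneg _) (by positivity)
    _ = ((N:ℝ) - 1) * ((1 / C) * (2 * M)) := by
        rw [Finset.sum_const, nsmul_eq_mul, hcard]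
    _ = 1 / (β * N * M) := by
        rw [hC]
        have h1 : (N:ℝ) - 1 ≠ 0 := by linarith
        field_simp
end

section
/- Let N ≥ 2, M > 0, fix an index i, and suppose the pattern x_i is well-separated, i.e. Δ_i ≥ 2/(β N) + β^{−1} log(2 (N − 1) N β M²). Then there exists a fixed point x_i* of the Hopfield update rule in the closed ball of radius 1/(β N M) centered at x_i, i.e. f(x_i*) = x_i* and ‖x_i* − x_i‖ ≤ 1/(β N M). -/
open scoped BigOperators RealInnerProductSpace

set_option maxHeartbeats 1600000

/-- For N ≥ 2, M > 0 and a well-separated pattern x_i, i.e.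
Δ_i ≥ 2/(β N) + β⁻¹ log(2 (N − 1) N β M²), there exists a fixed point x_i* of the update
rule in the closed ball of radius 1/(β N M) centered at x_i. -/
theorem wellSeparated_exists_fixedPoint
    {d N : ℕ} (hN : 2 ≤ N) (x : Fin N → EuclideanSpace ℝ (Fin d)) (β M Δ : ℝ)
    (hβ : 0 < β) (hMpos : 0 < M)
    (hM : IsGreatest (Set.range fun i => ‖x i‖) M)
    (i : Fin N)
    (hΔ : IsLeast {v : ℝ | ∃ j, j ≠ i ∧ v = ⟪x i, x i⟫ - ⟪x i, x j⟫} Δ)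
    (hsep : 2 / (β * N) + β⁻¹ * Real.log (2 * ((N : ℝ) - 1) * N * β * M ^ 2) ≤ Δ) :
    ∃ xstar : EuclideanSpace ℝ (Fin d),
      hopfieldUpdate x β xstar = xstar ∧ ‖xstar - x i‖ ≤ 1 / (β * N * M) := by
  classical
  have hN2 : (2:ℝ) ≤ (N:ℝ) := by exact_mod_cast hN
  have hN0 : (0:ℝ) < (N:ℝ) := by linarith
  have hN1 : (0:ℝ) < (N:ℝ) - 1 := by linarith
  have hN0' : (N:ℝ) ≠ 0 := hN0.ne'
  have hN1' : (N:ℝ) - 1 ≠ 0 := hN1.ne'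
  have hβ' : β ≠ 0 := hβ.ne'
  have hM' : M ≠ 0 := hMpos.ne'
  set L : ℝ := 2 * ((N : ℝ) - 1) * N * β * M ^ 2 with hLdef
  have hL : 0 < L :=
    mul_pos (mul_pos (mul_pos (mul_pos two_pos hN1) hN0) hβ) (pow_pos hMpos 2)
  set r : ℝ := 1 / (β * N * M) with hrdef
  have hr : 0 < r := by rw [hrdef]; positivity
  set c : ℝ := ((N:ℝ) - 1) / L with hcdef
  have hc : 0 < c := div_pos hN1 hL
  set s : ℝ := c / (1 + c) with hsdef
  have hs0 : 0 < s := div_pos hc (by linarith)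
  have hs_le_c : s ≤ c := div_le_self hc.le (by linarith)
  set K : ℝ := 4 * β * M ^ 2 * s with hKdef
  have hK0 : 0 ≤ K := mul_nonneg (by positivity) hs0.le
  have hcval : 4 * β * M ^ 2 * c = 2 / (N:ℝ) := by
    rw [hcdef, hLdef]; field_simp; ring
  have hK1 : K < 1 := by
    rw [hKdef, hsdef, ← mul_div_assoc, hcval, div_lt_one (by linarith : (0:ℝ) < 1 + c)]
    have h1 : 2 / (N:ℝ) ≤ 1 := by rw [div_le_one hN0]; exact hN2
    linarith
  set B : Set (EuclideanSpace ℝ (Fin d)) := Metric.closedBall (x i) r with hBdef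
  set f := hopfieldUpdate x β with hfdef
  have hxM : ∀ k, ‖x k‖ ≤ M := fun k => hM.2 ⟨k, rfl⟩
  have hZpos : ∀ ξ : EuclideanSpace ℝ (Fin d),
      (0:ℝ) < ∑ k, Real.exp (β * ⟪x k, ξ⟫) :=
    fun ξ => Finset.sum_pos (fun k _ => Real.exp_pos _) ⟨i, Finset.mem_univ i⟩
  have hfeq : ∀ ξ, f ξ =
      ∑ j, (Real.exp (β * ⟪x j, ξ⟫) / ∑ k, Real.exp (β * ⟪x k, ξ⟫)) • x j := fun ξ => rfl
  have hβΔ : 2 / (N:ℝ) + Real.log L ≤ β * Δ := by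
    have h := mul_le_mul_of_nonneg_left hsep hβ.le
    have he : β * (2 / (β * N) + β⁻¹ * Real.log L) = 2 / (N:ℝ) + Real.log L := by
      field_simp
    rw [he] at h; exact h
  have h2Mr : β * (2 * M * r) = 2 / (N:ℝ) := by
    rw [hrdef]; field_simp
  -- key exponential estimate on the ball
  have hkey : ∀ ξ ∈ B, ∀ j, j ≠ i →
      Real.exp (β * ⟪x j, ξ⟫) ≤ Real.exp (β * ⟪x i, ξ⟫) / L := by
    intro ξ hξ j hj
    have hnd : ‖ξ - x i‖ ≤ r := by
      rw [hBdef, Metric.mem_closedBall, dist_eq_norm] at hξ; exact hξ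
    have h1 : ⟪x i, x j⟫ - ⟪x i, x i⟫ ≤ -Δ := by
      have := hΔ.2 ⟨j, hj, rfl⟩; linarith
    have h2 : ⟪x j - x i, ξ - x i⟫ ≤ 2 * M * r := by
      calc ⟪x j - x i, ξ - x i⟫ ≤ ‖x j - x i‖ * ‖ξ - x i‖ := real_inner_le_norm _ _
        _ ≤ (M + M) * r := by
            apply mul_le_mul _ hnd (norm_nonneg _) (by positivity)
            exact (norm_sub_le _ _).trans (add_le_add (hxM j) (hxM i))
        _ = 2 * M * r := by ring
    have e1 : ⟪x j, ξ⟫ - ⟪x i, ξ⟫ =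
        (⟪x i, x j⟫ - ⟪x i, x i⟫) + ⟪x j - x i, ξ - x i⟫ := by
      simp only [inner_sub_left, inner_sub_right, real_inner_comm (x j) (x i)]; ring
    have h3 : ⟪x j, ξ⟫ - ⟪x i, ξ⟫ ≤ -Δ + 2 * M * r := by linarith
    have h4 : β * ⟪x j, ξ⟫ - β * ⟪x i, ξ⟫ ≤ -Real.log L := by
      have hm := mul_le_mul_of_nonneg_left h3 hβ.le
      rw [mul_sub, mul_add, mul_neg] at hm
      rw [h2Mr] at hm
      linarith
    calc Real.exp (β * ⟪x j, ξ⟫)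
        = Real.exp (β * ⟪x i, ξ⟫) * Real.exp (β * ⟪x j, ξ⟫ - β * ⟪x i, ξ⟫) := by
          rw [← Real.exp_add]; ring_nf
      _ ≤ Real.exp (β * ⟪x i, ξ⟫) * Real.exp (-Real.log L) := by
          exact mul_le_mul_of_nonneg_left (Real.exp_le_exp.2 h4) (Real.exp_pos _).le
      _ = Real.exp (β * ⟪x i, ξ⟫) / L := by
          rw [Real.exp_neg, Real.exp_log hL, div_eq_mul_inv]
  have hsum : ∀ ξ ∈ B,
      (∑ j ∈ Finset.univ.erase i, Real.exp (β * ⟪x j, ξ⟫)) ≤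
      c * Real.exp (β * ⟪x i, ξ⟫) := by
    intro ξ hξ
    calc (∑ j ∈ Finset.univ.erase i, Real.exp (β * ⟪x j, ξ⟫))
        ≤ ∑ _j ∈ Finset.univ.erase i, Real.exp (β * ⟪x i, ξ⟫) / L :=
          Finset.sum_le_sum fun j hj => hkey ξ hξ j (Finset.ne_of_mem_erase hj)
      _ = ((N:ℝ) - 1) * (Real.exp (β * ⟪x i, ξ⟫) / L) := by
          rw [Finset.sum_const, Finset.card_erase_of_mem (Finset.mem_univ i),
            Finset.card_univ, Fintype.card_fin, nsmul_eq_mul,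
            Nat.cast_sub (by omega : 1 ≤ N), Nat.cast_one]
      _ = c * Real.exp (β * ⟪x i, ξ⟫) := by rw [hcdef]; ring
  have hS : ∀ ξ ∈ B,
      (∑ j ∈ Finset.univ.erase i,
        Real.exp (β * ⟪x j, ξ⟫) / ∑ k, Real.exp (β * ⟪x k, ξ⟫)) ≤ s := by
    intro ξ hξ
    have hZ : (∑ k, Real.exp (β * ⟪x k, ξ⟫)) =
        (∑ j ∈ Finset.univ.erase i, Real.exp (β * ⟪x j, ξ⟫)) + Real.exp (β * ⟪x i, ξ⟫) :=
      (Finset.sum_erase_add _ _ (Finset.mem_univ i)).symm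
    have hT0 : (0:ℝ) ≤ ∑ j ∈ Finset.univ.erase i, Real.exp (β * ⟪x j, ξ⟫) :=
      Finset.sum_nonneg fun _ _ => (Real.exp_pos _).le
    have hEi : (0:ℝ) < Real.exp (β * ⟪x i, ξ⟫) := Real.exp_pos _
    have hTc := hsum ξ hξ
    rw [← Finset.sum_div, hZ, hsdef,
      div_le_div_iff₀ (by linarith) (by linarith)]
    nlinarith
  have hsum1 : ∀ ξ : EuclideanSpace ℝ (Fin d),
      (∑ j, Real.exp (β * ⟪x j, ξ⟫) / ∑ k, Real.exp (β * ⟪x k, ξ⟫)) = 1 := fun ξ => by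
    rw [← Finset.sum_div, div_self (hZpos ξ).ne']
  have hfsub : ∀ ξ, f ξ - x i =
      ∑ j, (Real.exp (β * ⟪x j, ξ⟫) / ∑ k, Real.exp (β * ⟪x k, ξ⟫)) • (x j - x i) := by
    intro ξ
    rw [hfeq ξ]
    simp only [smul_sub, Finset.sum_sub_distrib, ← Finset.sum_smul, hsum1 ξ, one_smul]
  have hnorm_fsub : ∀ ξ ∈ B, ‖f ξ - x i‖ ≤ 2 * M * s := by
    intro ξ hξ
    rw [hfsub ξ, ← Finset.sum_erase_add _ _ (Finset.mem_univ i), sub_self, smul_zero,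
      add_zero]
    calc ‖∑ j ∈ Finset.univ.erase i,
          (Real.exp (β * ⟪x j, ξ⟫) / ∑ k, Real.exp (β * ⟪x k, ξ⟫)) • (x j - x i)‖
        ≤ ∑ j ∈ Finset.univ.erase i,
          ‖(Real.exp (β * ⟪x j, ξ⟫) / ∑ k, Real.exp (β * ⟪x k, ξ⟫)) • (x j - x i)‖ :=
          norm_sum_le _ _
      _ ≤ ∑ j ∈ Finset.univ.erase i,
          (Real.exp (β * ⟪x j, ξ⟫) / ∑ k, Real.exp (β * ⟪x k, ξ⟫)) * (2 * M) := by
          refine Finset.sum_le_sum fun j hj => ?_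
          rw [norm_smul, Real.norm_eq_abs,
            abs_of_pos (div_pos (Real.exp_pos _) (hZpos ξ))]
          refine mul_le_mul_of_nonneg_left ?_ (div_pos (Real.exp_pos _) (hZpos ξ)).le
          exact (norm_sub_le _ _).trans (by linarith [hxM j, hxM i])
      _ = (∑ j ∈ Finset.univ.erase i,
          Real.exp (β * ⟪x j, ξ⟫) / ∑ k, Real.exp (β * ⟪x k, ξ⟫)) * (2 * M) :=
          (Finset.sum_mul _ _ _).symm
      _ ≤ s * (2 * M) := mul_le_mul_of_nonneg_right (hS ξ hξ) (by positivity)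
      _ = 2 * M * s := by ring
  have h2Mc : 2 * M * c = r := by
    rw [hcdef, hLdef, hrdef]; field_simp
  have h2Ms_le_r : 2 * M * s ≤ r := by
    rw [← h2Mc]
    have := mul_le_mul_of_nonneg_left hs_le_c (by positivity : (0:ℝ) ≤ 2 * M)
    linarith
  have hMaps : Set.MapsTo f B B := by
    intro ξ hξ
    rw [hBdef, Metric.mem_closedBall, dist_eq_norm]
    exact (hnorm_fsub ξ hξ).trans h2Ms_le_r
  -- Lipschitz estimate on the ball
  have hLip : ∀ ξ ∈ B, ∀ ξ' ∈ B, ‖f ξ' - f ξ‖ ≤ K * ‖ξ' - ξ‖ := by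
    intro ξ hξ ξ' hξ'
    set η : EuclideanSpace ℝ (Fin d) := ξ' - ξ with hη
    set b : Fin N → ℝ := fun k => β * ⟪x k, η⟫ with hb
    set e : Fin N → ℝ → ℝ := fun k t => Real.exp (β * ⟪x k, ξ⟫ + t * b k) with he
    set Z : ℝ → ℝ := fun t => ∑ k, e k t with hZdef
    set Z' : ℝ → ℝ := fun t => ∑ k, b k * e k t with hZ'def
    set p : Fin N → ℝ → ℝ := fun j t => e j t / Z t with hpdef
    set p' : Fin N → ℝ → ℝ :=
      fun j t => (b j * e j t * Z t - e j t * Z' t) / Z t ^ 2 with hp'def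
    set G : ℝ → EuclideanSpace ℝ (Fin d) := fun t => ∑ j, p j t • x j with hGdef
    have hep : ∀ k t, (0:ℝ) < e k t := fun k t => Real.exp_pos _
    have hZpos' : ∀ t, (0:ℝ) < Z t :=
      fun t => Finset.sum_pos (fun k _ => Real.exp_pos _) ⟨i, Finset.mem_univ i⟩
    have hmem : ∀ t ∈ Set.Icc (0:ℝ) 1, ξ + t • η ∈ B := by
      intro t ht
      have hpath : ξ + t • η = (1 - t) • ξ + t • ξ' := by rw [hη]; module
      rw [hpath, hBdef]
      have hconv := convex_closedBall (x i) r
      rw [hBdef] at hξ hξ'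
      exact hconv hξ hξ' (by linarith [ht.2]) ht.1 (by ring)
    have hinner : ∀ (k : Fin N) (t : ℝ),
        β * ⟪x k, ξ + t • η⟫ = β * ⟪x k, ξ⟫ + t * b k := by
      intro k t
      rw [hb]
      simp only [inner_add_right, real_inner_smul_right]
      ring
    have hGf : ∀ t, G t = f (ξ + t • η) := by
      intro t
      rw [hGdef, hfeq]
      refine Finset.sum_congr rfl fun j _ => ?_
      simp only [hpdef, he, hZdef, hinner]
    have hDe : ∀ k t, HasDerivAt (e k) (b k * e k t) t := by
      intro k t
      have h1 : HasDerivAt (fun u : ℝ => β * ⟪x k, ξ⟫ + u * b k) (b k) t := by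
        simpa using ((hasDerivAt_id t).mul_const (b k)).const_add (β * ⟪x k, ξ⟫)
      simpa [he, mul_comm] using h1.exp
    have hDZ : ∀ t, HasDerivAt Z (Z' t) t := by
      intro t
      rw [hZdef, hZ'def]
      exact HasDerivAt.fun_sum fun k _ => hDe k t
    have hDp : ∀ j t, HasDerivAt (p j) (p' j t) t := by
      intro j t
      rw [hpdef, hp'def]
      exact (hDe j t).div (hDZ t) (hZpos' t).ne'
    have hDG : ∀ t, HasDerivAt G (∑ j, p' j t • x j) t := by
      intro t
      rw [hGdef]
      exact HasDerivAt.fun_sum fun j _ => (hDp j t).smul_const (x j)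
    have hsum_p' : ∀ t, (∑ j, p' j t) = 0 := by
      intro t
      have hnum : (∑ j, (b j * e j t * Z t - e j t * Z' t)) = 0 := by
        rw [Finset.sum_sub_distrib, ← Finset.sum_mul, ← Finset.sum_mul]
        simp only [hZdef, hZ'def]
        ring
      simp only [hp'def, ← Finset.sum_div, hnum, zero_div]
    have hG'alt : ∀ t, (∑ j, p' j t • x j) = ∑ j, p' j t • (x j - x i) := by
      intro t
      simp only [smul_sub, Finset.sum_sub_distrib, ← Finset.sum_smul, hsum_p' t,
        zero_smul, sub_zero]
    have hb_bound : ∀ j k : Fin N, |b j - b k| ≤ 2 * β * M * ‖η‖ := by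
      intro j k
      have hbk : b j - b k = β * ⟪x j - x k, η⟫ := by
        simp only [hb, inner_sub_left]; ring
      rw [hbk, abs_mul, abs_of_pos hβ]
      calc β * |⟪x j - x k, η⟫| ≤ β * (‖x j - x k‖ * ‖η‖) := by
            exact mul_le_mul_of_nonneg_left (abs_real_inner_le_norm _ _) hβ.le
        _ ≤ β * ((M + M) * ‖η‖) := by
            refine mul_le_mul_of_nonneg_left ?_ hβ.le
            exact mul_le_mul_of_nonneg_right
              ((norm_sub_le _ _).trans (add_le_add (hxM j) (hxM k))) (norm_nonneg _)
        _ = 2 * β * M * ‖η‖ := by ring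
    have hp'_bound : ∀ j t, |p' j t| ≤ p j t * (2 * β * M * ‖η‖) := by
      intro j t
      have hnum : b j * e j t * Z t - e j t * Z' t =
          e j t * (∑ k, (b j - b k) * e k t) := by
        simp only [hZdef, hZ'def, Finset.mul_sum, ← Finset.sum_sub_distrib]
        exact Finset.sum_congr rfl fun k _ => by ring
      have h1 : |∑ k, (b j - b k) * e k t| ≤ (2 * β * M * ‖η‖) * Z t := by
        calc |∑ k, (b j - b k) * e k t| ≤ ∑ k, |(b j - b k) * e k t| :=
              Finset.abs_sum_le_sum_abs _ _
          _ ≤ ∑ k, (2 * β * M * ‖η‖) * e k t := by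
              refine Finset.sum_le_sum fun k _ => ?_
              rw [abs_mul, abs_of_pos (hep k t)]
              exact mul_le_mul_of_nonneg_right (hb_bound j k) (hep k t).le
          _ = (2 * β * M * ‖η‖) * Z t := by
              rw [← Finset.mul_sum]
      simp only [hp'def, hpdef]
      rw [hnum, abs_div, abs_mul, abs_of_pos (hep j t),
        abs_of_pos (pow_pos (hZpos' t) 2),
        div_le_iff₀ (pow_pos (hZpos' t) 2)]
      have hZne : Z t ≠ 0 := (hZpos' t).ne'
      have heq : e j t / Z t * (2 * β * M * ‖η‖) * Z t ^ 2 =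
          e j t * ((2 * β * M * ‖η‖) * Z t) := by
        field_simp
      rw [heq]
      exact mul_le_mul_of_nonneg_left h1 (hep j t).le
    have hbound : ∀ t ∈ Set.Icc (0:ℝ) 1, ‖∑ j, p' j t • x j‖ ≤ K * ‖η‖ := by
      intro t ht
      have htB : ξ + t • η ∈ B := hmem t ht
      have hSsum : (∑ j ∈ Finset.univ.erase i, p j t) ≤ s := by
        have h := hS (ξ + t • η) htB
        simp only [hinner] at h
        simpa only [hpdef, he, hZdef] using h
      rw [hG'alt t, ← Finset.sum_erase_add _ _ (Finset.mem_univ i), sub_self,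
        smul_zero, add_zero]
      calc ‖∑ j ∈ Finset.univ.erase i, p' j t • (x j - x i)‖
          ≤ ∑ j ∈ Finset.univ.erase i, ‖p' j t • (x j - x i)‖ := norm_sum_le _ _
        _ ≤ ∑ j ∈ Finset.univ.erase i, p j t * (2 * β * M * ‖η‖) * (2 * M) := by
            refine Finset.sum_le_sum fun j hj => ?_
            rw [norm_smul, Real.norm_eq_abs]
            have hppos : (0:ℝ) ≤ p j t * (2 * β * M * ‖η‖) :=
              mul_nonneg (div_pos (hep j t) (hZpos' t)).le (by positivity)
            exact mul_le_mul (hp'_bound j t)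
              ((norm_sub_le _ _).trans (by linarith [hxM j, hxM i]))
              (norm_nonneg _) hppos
        _ = (∑ j ∈ Finset.univ.erase i, p j t) * ((2 * β * M * ‖η‖) * (2 * M)) := by
            rw [← Finset.sum_mul, ← Finset.sum_mul, mul_assoc]
        _ ≤ s * ((2 * β * M * ‖η‖) * (2 * M)) :=
            mul_le_mul_of_nonneg_right hSsum (by positivity)
        _ = K * ‖η‖ := by rw [hKdef]; ring
    have hmvt := norm_image_sub_le_of_norm_deriv_le_segment_01'
      (f := G) (f' := fun t => ∑ j, p' j t • x j) (C := K * ‖η‖)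
      (fun t ht => (hDG t).hasDerivWithinAt)
      (fun t ht => hbound t (Set.Ico_subset_Icc_self ht))
    have he1 : ξ + (1:ℝ) • η = ξ' := by rw [hη]; module
    have he0 : ξ + (0:ℝ) • η = ξ := by rw [hη]; module
    have hG1 : G 1 = f ξ' := by rw [hGf 1, he1]
    have hG0 : G 0 = f ξ := by rw [hGf 0, he0]
    rw [hG1, hG0] at hmvt
    exact hmvt
  -- Banach fixed point theorem
  set K0 : NNReal := ⟨K, hK0⟩ with hK0def
  have hlipOn : LipschitzOnWith K0 f B := by
    apply LipschitzOnWith.of_dist_le_mul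
    intro a ha b hb
    rw [dist_eq_norm, dist_eq_norm]
    exact hLip b hb a ha
  have hK01 : K0 < 1 := by
    rw [← NNReal.coe_lt_coe]
    push_cast
    exact hK1
  have hcontr : ContractingWith K0 (hMaps.restrict f B B) :=
    ⟨hK01, hlipOn.mapsToRestrict hMaps⟩
  have hximem : x i ∈ B := by rw [hBdef]; exact Metric.mem_closedBall_self hr.le
  obtain ⟨y, hyB, hyfix, -, -⟩ :=
    ContractingWith.exists_fixedPoint' Metric.isClosed_closedBall.isComplete hMaps hcontr
      hximem (edist_ne_top _ _)
  refine ⟨y, hyfix, ?_⟩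
  rw [hBdef, Metric.mem_closedBall, dist_eq_norm] at hyB
  exact hyB
end
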